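/- arXiv:math/0304440 — 3 statements merged into one kernel-verified Lean document; each statement's English description precedes it below -/
import Mathlib

section
/- Let f : [0,1] → [0,1] be an orientation-preserving C^{1,α} diffeomorphism (f' Hölder of exponent α ∈ (0,1], f'> 0) fixing 0 and 1. If J ⊂ [0,1] is a closed interval with f(J) ∩ J = ∅, then there is a constant c depending only on f such that for every n ∈ ℕ and all x, y ∈ J, |log((fⁿ)'(x)/(fⁿ)'(y))| ≤ c·n^{1−α}. -/
open Finset Real

lemma aux_jensen {α : ℝ} (hα0 : 0 < α) (hα1 : α ≤ 1) (n : ℕ) (t : ℕ → ℝ)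
    (ht : ∀ k, 0 ≤ t k) (htsum : ∑ k ∈ Finset.range n, t k ≤ 1) :
    ∑ k ∈ Finset.range n, t k ^ α ≤ (n:ℝ) ^ (1 - α) := by
  rcases Nat.eq_zero_or_pos n with rfl | hn
  · simpa using Real.rpow_nonneg le_rfl (1 - α)
  have hn0 : (0:ℝ) < n := Nat.cast_pos.2 hn
  have hp : (1:ℝ) ≤ 1/α := by rw [le_div_iff₀ hα0]; linarith
  have key := Real.arith_mean_le_rpow_mean (Finset.range n) (fun _ => 1/(n:ℝ))
      (fun k => t k ^ α) (fun i _ => by positivity)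
      (by simp [Finset.sum_const]; field_simp)
      (fun i _ => Real.rpow_nonneg (ht i) α) hp
  have h2 : ∀ k, (t k ^ α) ^ (1/α) = t k := by
    intro k
    rw [← Real.rpow_mul (ht k), mul_one_div_cancel hα0.ne', Real.rpow_one]
  simp only [h2, one_div_one_div] at key
  rw [← Finset.mul_sum, ← Finset.mul_sum] at key
  -- key : 1/n * ∑ t^α ≤ (1/n * ∑ t)^α
  have h3 : (1/(n:ℝ) * ∑ k ∈ Finset.range n, t k) ^ α ≤ (1/(n:ℝ)) ^ α := by
    have : 1/(n:ℝ) * ∑ k ∈ Finset.range n, t k ≤ 1/(n:ℝ) * 1 := by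
      gcongr
    calc (1/(n:ℝ) * ∑ k ∈ Finset.range n, t k) ^ α ≤ (1/(n:ℝ) * 1) ^ α := by
          exact Real.rpow_le_rpow (mul_nonneg (by positivity)
            (Finset.sum_nonneg fun i _ => ht i)) this hα0.le
      _ = (1/(n:ℝ)) ^ α := by rw [mul_one]
  have h4 : ∑ k ∈ Finset.range n, t k ^ α ≤ (n:ℝ) * (1/(n:ℝ)) ^ α := by
    have := le_trans key h3
    calc ∑ k ∈ Finset.range n, t k ^ α
        = (n:ℝ) * (1/(n:ℝ) * ∑ k ∈ Finset.range n, t k ^ α) := by field_simp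
      _ ≤ (n:ℝ) * (1/(n:ℝ)) ^ α := by gcongr
  calc ∑ k ∈ Finset.range n, t k ^ α ≤ (n:ℝ) * (1/(n:ℝ)) ^ α := h4
    _ = (n:ℝ) ^ (1-α) := by
        rw [one_div, Real.inv_rpow hn0.le, Real.rpow_sub hn0, Real.rpow_one, div_eq_mul_inv]

lemma aux_log {m : ℝ} (hm : 0 < m) (u v : ℝ) (hu : m ≤ u) (hv : m ≤ v) :
    |Real.log u - Real.log v| ≤ |u - v| / m := by
  have key : ∀ u v : ℝ, m ≤ u → m ≤ v → v ≤ u → Real.log u - Real.log v ≤ (u - v) / m := by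
    intro u v hu hv hvu
    have hv0 : 0 < v := lt_of_lt_of_le hm hv
    have hu0 : 0 < u := lt_of_lt_of_le hm hu
    rw [← Real.log_div hu0.ne' hv0.ne']
    calc Real.log (u/v) ≤ u/v - 1 := Real.log_le_sub_one_of_pos (by positivity)
      _ = (u - v)/v := by field_simp
      _ ≤ (u - v)/m := by gcongr
  rcases le_total v u with h | h
  · rw [abs_of_nonneg (sub_nonneg.2 (Real.log_le_log (lt_of_lt_of_le hm hv) h)),
      abs_of_nonneg (sub_nonneg.2 h)]
    exact key u v hu hv h
  · rw [abs_sub_comm, abs_sub_comm u v,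
      abs_of_nonneg (sub_nonneg.2 (Real.log_le_log (lt_of_lt_of_le hm hu) h)),
      abs_of_nonneg (sub_nonneg.2 h)]
    exact key v u hv hu h

theorem stmt_6 (α : ℝ) (hα : α ∈ Set.Ioc (0:ℝ) 1)
    (f : ℝ → ℝ)
    (hmaps : Set.MapsTo f (Set.Icc 0 1) (Set.Icc 0 1))
    (hC1 : ContDiffOn ℝ 1 f (Set.Icc 0 1))
    (hder : ∀ x ∈ Set.Icc (0:ℝ) 1, 0 < deriv f x)
    (h0 : f 0 = 0) (h1 : f 1 = 1)
    (Chol : ℝ)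
    (hhol : ∀ x ∈ Set.Icc (0:ℝ) 1, ∀ y ∈ Set.Icc (0:ℝ) 1,
      |deriv f x - deriv f y| ≤ Chol * |x - y| ^ α)
    (a b : ℝ) (hab : a ≤ b) (hJ : Set.Icc a b ⊆ Set.Icc 0 1)
    (hdisj : f '' Set.Icc a b ∩ Set.Icc a b = ∅) :
    ∃ c > 0, ∀ n : ℕ, ∀ x ∈ Set.Icc a b, ∀ y ∈ Set.Icc a b,
      |Real.log (deriv (f^[n]) x / deriv (f^[n]) y)| ≤ c * (n : ℝ) ^ (1 - α) := by
  obtain ⟨hα0, hα1⟩ := hα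
  have ha1 : a ∈ Set.Icc (0:ℝ) 1 := hJ (Set.left_mem_Icc.2 hab)
  have hb1 : b ∈ Set.Icc (0:ℝ) 1 := hJ (Set.right_mem_Icc.2 hab)
  -- differentiability of f on [0,1]
  have hd : ∀ x ∈ Set.Icc (0:ℝ) 1, DifferentiableAt ℝ f x := by
    intro x hx
    by_contra h
    exact absurd (deriv_zero_of_not_differentiableAt h) (hder x hx).ne'
  have hcont : ContinuousOn f (Set.Icc (0:ℝ) 1) :=
    fun x hx => (hd x hx).continuousAt.continuousWithinAt
  have hmono : StrictMonoOn f (Set.Icc (0:ℝ) 1) :=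
    strictMonoOn_of_deriv_pos (convex_Icc 0 1) hcont
      (fun x hx => hder x (interior_subset hx))
  have hmapsk : ∀ k : ℕ, Set.MapsTo (f^[k]) (Set.Icc (0:ℝ) 1) (Set.Icc (0:ℝ) 1) :=
    fun k => hmaps.iterate k
  have hmonok : ∀ k : ℕ, MonotoneOn (f^[k]) (Set.Icc (0:ℝ) 1) := by
    intro k
    induction k with
    | zero => simpa using monotoneOn_id
    | succ k ih =>
      rw [Function.iterate_succ']
      exact fun u hu v hv huv =>
        hmono.monotoneOn (hmapsk k hu) (hmapsk k hv) (ih hu hv huv)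
  -- no point of J is mapped into J
  have hnot : ∀ z ∈ Set.Icc a b, f z ∉ Set.Icc a b := by
    intro z hz hfz
    have : f z ∈ f '' Set.Icc a b ∩ Set.Icc a b := ⟨Set.mem_image_of_mem f hz, hfz⟩
    rw [hdisj] at this
    exact this
  -- sum of lengths of the iterated intervals is at most 1
  have hsum1 : ∀ n : ℕ, ∑ k ∈ Finset.range n, (f^[k] b - f^[k] a) ≤ 1 := by
    have hfa := hnot a (Set.left_mem_Icc.2 hab)
    rcases lt_or_ge (f a) a with hcase | hcase
    · -- f a < a ; show f b < a
      have hfb : f b < a := by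
        by_contra h
        push_neg at h
        have hfbb : b < f b := by
          have := hnot b (Set.right_mem_Icc.2 hab)
          rcases lt_or_ge b (f b) with h' | h'
          · exact h'
          · exact absurd ⟨h, h'⟩ this
        -- IVT gives a fixed point in [a,b]
        have hgc : ContinuousOn (fun x => f x - x) (Set.Icc a b) :=
          (hcont.mono hJ).sub continuousOn_id
        have h0mem : (0:ℝ) ∈ Set.Icc (f a - a) (f b - b) :=
          ⟨by linarith, by linarith⟩
        obtain ⟨c, hc, hc0⟩ := intermediate_value_Icc hab hgc h0mem
        have hfc : f c = c := by
          have : f c - c = 0 := hc0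
          linarith
        exact hnot c hc (by rw [hfc]; exact hc)
      intro n
      have hstep : ∀ k : ℕ, f^[k] b - f^[k] a ≤ f^[k] b - f^[k+1] b := by
        intro k
        have : f^[k+1] b ≤ f^[k] a := by
          rw [Function.iterate_succ_apply]
          exact hmonok k (hmaps hb1) ha1 hfb.le
        linarith
      calc ∑ k ∈ Finset.range n, (f^[k] b - f^[k] a)
          ≤ ∑ k ∈ Finset.range n, (f^[k] b - f^[k+1] b) :=
            Finset.sum_le_sum fun k _ => hstep k
        _ = f^[0] b - f^[n] b := Finset.sum_range_sub' (fun k => f^[k] b) n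
        _ ≤ 1 := by
            have h1' : f^[n] b ∈ Set.Icc (0:ℝ) 1 := hmapsk n hb1
            have h2' : b ≤ 1 := hb1.2
            simp only [Function.iterate_zero_apply]
            linarith [h1'.1]
    · -- a ≤ f a, hence b < f a
      have hfa' : b < f a := by
        rcases lt_or_ge b (f a) with h' | h'
        · exact h'
        · exact absurd ⟨hcase, h'⟩ hfa
      intro n
      have hstep : ∀ k : ℕ, f^[k] b - f^[k] a ≤ f^[k+1] a - f^[k] a := by
        intro k
        have : f^[k] b ≤ f^[k+1] a := by
          rw [Function.iterate_succ_apply]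
          exact hmonok k hb1 (hmaps ha1) hfa'.le
        linarith
      calc ∑ k ∈ Finset.range n, (f^[k] b - f^[k] a)
          ≤ ∑ k ∈ Finset.range n, (f^[k+1] a - f^[k] a) :=
            Finset.sum_le_sum fun k _ => hstep k
        _ = f^[n] a - f^[0] a := Finset.sum_range_sub (fun k => f^[k] a) n
        _ ≤ 1 := by
            have h1' : f^[n] a ∈ Set.Icc (0:ℝ) 1 := hmapsk n ha1
            have h2' : 0 ≤ a := ha1.1
            simp only [Function.iterate_zero_apply]
            linarith [h1'.2]
  -- derivative of iterate
  have hditer : ∀ n : ℕ, ∀ x ∈ Set.Icc (0:ℝ) 1, DifferentiableAt ℝ (f^[n]) x ∧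
      deriv (f^[n]) x = ∏ k ∈ Finset.range n, deriv f (f^[k] x) := by
    intro n
    induction n with
    | zero => intro x hx; simp
    | succ n ih =>
      intro x hx
      obtain ⟨ihd, ihe⟩ := ih x hx
      have hx' : f^[n] x ∈ Set.Icc (0:ℝ) 1 := hmapsk n hx
      rw [Function.iterate_succ']
      constructor
      · exact DifferentiableAt.comp x (hd _ hx') ihd
      · rw [deriv_comp x (hd _ hx') ihd, ihe, Finset.prod_range_succ]
        ring
  -- continuity of the derivative via Hölder bound
  have hcd : ContinuousOn (deriv f) (Set.Icc (0:ℝ) 1) := by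
    intro x hx
    have h1 : Filter.Tendsto (fun y : ℝ => Chol * |y - x| ^ α)
        (nhdsWithin x (Set.Icc (0:ℝ) 1)) (nhds 0) := by
      have h2 : Filter.Tendsto (fun y : ℝ => |y - x|)
          (nhdsWithin x (Set.Icc (0:ℝ) 1)) (nhds 0) := by
        have h : ContinuousWithinAt (fun y : ℝ => |y - x|) (Set.Icc (0:ℝ) 1) x :=
          ((continuous_id.sub continuous_const).abs).continuousWithinAt
        simpa [ContinuousWithinAt] using h
      have h3 := (Real.continuousAt_rpow_const 0 α (Or.inr hα0.le)).tendsto.comp h2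
      rw [Real.zero_rpow hα0.ne'] at h3
      simpa using h3.const_mul Chol
    have h4 : Filter.Tendsto (fun y => deriv f y - deriv f x)
        (nhdsWithin x (Set.Icc (0:ℝ) 1)) (nhds 0) := by
      apply squeeze_zero_norm' _ h1
      filter_upwards [self_mem_nhdsWithin] with y hy
      simpa using hhol y hy x hx
    have := h4.add_const (deriv f x)
    simpa [ContinuousWithinAt] using this
  -- minimum of the derivative
  obtain ⟨x₀, hx₀, hminOn⟩ := isCompact_Icc.exists_isMinOn
    (Set.nonempty_Icc.2 zero_le_one) hcd
  set m := deriv f x₀ with hmdef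
  have hm : 0 < m := hder x₀ hx₀
  have hmin : ∀ z ∈ Set.Icc (0:ℝ) 1, m ≤ deriv f z := fun z hz => hminOn hz
  have hChol : 0 ≤ Chol := by
    have h01 : (0:ℝ) ∈ Set.Icc (0:ℝ) 1 := ⟨le_refl 0, zero_le_one⟩
    have h11 : (1:ℝ) ∈ Set.Icc (0:ℝ) 1 := ⟨zero_le_one, le_refl 1⟩
    have := hhol 0 h01 1 h11
    have habs : |(0:ℝ) - 1| ^ α = 1 := by
      norm_num
    rw [habs, mul_one] at this
    exact le_trans (abs_nonneg _) this
  refine ⟨Chol / m + 1, by positivity, ?_⟩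
  intro n x hx y hy
  have hx1 : x ∈ Set.Icc (0:ℝ) 1 := hJ hx
  have hy1 : y ∈ Set.Icc (0:ℝ) 1 := hJ hy
  obtain ⟨-, hdx⟩ := hditer n x hx1
  obtain ⟨-, hdy⟩ := hditer n y hy1
  have hposx : ∀ k : ℕ, 0 < deriv f (f^[k] x) := fun k => hder _ (hmapsk k hx1)
  have hposy : ∀ k : ℕ, 0 < deriv f (f^[k] y) := fun k => hder _ (hmapsk k hy1)
  have hx0 : 0 < deriv (f^[n]) x := by
    rw [hdx]; exact Finset.prod_pos fun k _ => hposx k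
  have hy0 : 0 < deriv (f^[n]) y := by
    rw [hdy]; exact Finset.prod_pos fun k _ => hposy k
  rw [Real.log_div hx0.ne' hy0.ne', hdx, hdy,
    Real.log_prod (fun k _ => (hposx k).ne'),
    Real.log_prod (fun k _ => (hposy k).ne'),
    ← Finset.sum_sub_distrib]
  have htle : ∀ k : ℕ, |f^[k] x - f^[k] y| ≤ f^[k] b - f^[k] a := by
    intro k
    have h1' := hmonok k ha1 hx1 hx.1
    have h2' := hmonok k hx1 hb1 hx.2
    have h3' := hmonok k ha1 hy1 hy.1
    have h4' := hmonok k hy1 hb1 hy.2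
    rw [abs_le]
    constructor <;> linarith
  calc |∑ k ∈ Finset.range n, (Real.log (deriv f (f^[k] x)) - Real.log (deriv f (f^[k] y)))|
      ≤ ∑ k ∈ Finset.range n, |Real.log (deriv f (f^[k] x)) - Real.log (deriv f (f^[k] y))| :=
        Finset.abs_sum_le_sum_abs _ _
    _ ≤ ∑ k ∈ Finset.range n, (Chol / m) * |f^[k] x - f^[k] y| ^ α := by
        apply Finset.sum_le_sum
        intro k _
        have hl := aux_log hm _ _ (hmin _ (hmapsk k hx1)) (hmin _ (hmapsk k hy1))
        refine le_trans hl ?_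
        rw [div_mul_eq_mul_div]
        gcongr
        exact hhol _ (hmapsk k hx1) _ (hmapsk k hy1)
    _ = (Chol / m) * ∑ k ∈ Finset.range n, |f^[k] x - f^[k] y| ^ α := by
        rw [Finset.mul_sum]
    _ ≤ (Chol / m) * (n:ℝ) ^ (1 - α) := by
        apply mul_le_mul_of_nonneg_left _ (by positivity)
        apply aux_jensen hα0 hα1 n _ (fun k => abs_nonneg _)
        calc ∑ k ∈ Finset.range n, |f^[k] x - f^[k] y|
            ≤ ∑ k ∈ Finset.range n, (f^[k] b - f^[k] a) :=
              Finset.sum_le_sum fun k _ => htle k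
          _ ≤ 1 := hsum1 n
    _ ≤ (Chol / m + 1) * (n:ℝ) ^ (1 - α) := by
        apply mul_le_mul_of_nonneg_right _ (Real.rpow_nonneg (Nat.cast_nonneg n) _)
        linarith
end

section
/- Let p > 0, 0 < α < 1, and b ≥ (p+1)·α. Then the function g(x) = x^b·sin(x^{−p}) for x ∈ (0,1], extended by g(0) = 0, satisfies the Hölder condition |g(x) − g(y)| ≤ C·|x − y|^α on [0,1] for some constant C depending only on b, p, α. -/
open Real Set

theorem stmt_9 (p α b : ℝ) (hp : 0 < p) (hα : α ∈ Set.Ioo (0:ℝ) 1)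
    (hb : (p + 1) * α ≤ b) :
    ∃ C : ℝ, ∀ x ∈ Set.Icc (0:ℝ) 1, ∀ y ∈ Set.Icc (0:ℝ) 1,
      |x ^ b * Real.sin (x ^ (-p)) - y ^ b * Real.sin (y ^ (-p))| ≤
        C * |x - y| ^ α := by
  obtain ⟨hα0, hα1⟩ := hα
  have hb0 : 0 < b := lt_of_lt_of_le (by positivity) hb
  set g : ℝ → ℝ := fun t => t ^ b * Real.sin (t ^ (-p)) with hgdef
  set C : ℝ := b + p + 2 ^ b + 1 with hCdef
  have hC0 : (0:ℝ) ≤ C := by positivity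
  have key : ∀ x ∈ Icc (0:ℝ) 1, ∀ y ∈ Icc (0:ℝ) 1, y ≤ x →
      |g x - g y| ≤ C * (x - y) ^ α := by
    intro x hx y hy hyx
    obtain ⟨hx0, hx1⟩ := hx
    obtain ⟨hy0, hy1⟩ := hy
    set h := x - y with hhdef
    have hh0 : 0 ≤ h := by simp [hhdef]; linarith
    rcases eq_or_lt_of_le hh0 with heq | hhpos
    · have hxy : x = y := by simp [hhdef] at heq; linarith
      simp only [hxy, sub_self, abs_zero]
      exact mul_nonneg hC0 (Real.rpow_nonneg hh0 α)
    have hh1 : h ≤ 1 := by simp [hhdef]; linarith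
    have hhα : (0:ℝ) ≤ h ^ α := Real.rpow_nonneg hh0 α
    have hgabs : ∀ t : ℝ, 0 ≤ t → |g t| ≤ t ^ b := by
      intro t ht
      rw [hgdef]
      simp only [abs_mul, abs_of_nonneg (Real.rpow_nonneg ht b)]
      calc t ^ b * |Real.sin (t ^ (-p))| ≤ t ^ b * 1 :=
            mul_le_mul_of_nonneg_left (Real.abs_sin_le_one _) (Real.rpow_nonneg ht b)
        _ = t ^ b := mul_one _
    rcases le_or_gt (y ^ (p + 1)) h with hcase | hcase
    · -- far case
      have hp1 : (0:ℝ) < p + 1 := by linarith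
      have hαle : α ≤ b / (p + 1) := (le_div_iff₀ hp1).mpr (by linarith [hb])
      have hhb : h ^ (b / (p + 1)) ≤ h ^ α :=
        Real.rpow_le_rpow_of_exponent_ge hhpos hh1 hαle
      have hyb : y ^ b ≤ h ^ α := by
        have h1 : y ^ b = (y ^ (p + 1)) ^ (b / (p + 1)) := by
          rw [← Real.rpow_mul hy0]
          congr 1
          field_simp
        calc y ^ b = (y ^ (p + 1)) ^ (b / (p + 1)) := h1
          _ ≤ h ^ (b / (p + 1)) :=
              Real.rpow_le_rpow (Real.rpow_nonneg hy0 _) hcase (by positivity)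
          _ ≤ h ^ α := hhb
      have hxb : x ^ b ≤ 2 ^ b * h ^ α := by
        have hy' : y ≤ h ^ (1 / (p + 1)) := by
          have : (y ^ (p + 1)) ^ (1 / (p + 1)) ≤ h ^ (1 / (p + 1)) :=
            Real.rpow_le_rpow (Real.rpow_nonneg hy0 _) hcase (by positivity)
          calc y = (y ^ (p + 1)) ^ (1 / (p + 1)) := by
                rw [← Real.rpow_mul hy0]
                rw [show (p + 1) * (1 / (p + 1)) = 1 by field_simp, Real.rpow_one]
            _ ≤ h ^ (1 / (p + 1)) := this
        have hh' : h ≤ h ^ (1 / (p + 1)) := by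
          calc h = h ^ (1:ℝ) := (Real.rpow_one h).symm
            _ ≤ h ^ (1 / (p + 1)) := by
                apply Real.rpow_le_rpow_of_exponent_ge hhpos hh1
                rw [div_le_one hp1]; linarith
        have hx2 : x ≤ 2 * h ^ (1 / (p + 1)) := by
          have : x = y + h := by simp [hhdef]
          rw [this]; linarith
        calc x ^ b ≤ (2 * h ^ (1 / (p + 1))) ^ b :=
              Real.rpow_le_rpow hx0 hx2 hb0.le
          _ = 2 ^ b * (h ^ (1 / (p + 1))) ^ b := by
              rw [Real.mul_rpow (by norm_num) (Real.rpow_nonneg hh0 _)]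
          _ = 2 ^ b * h ^ ((1 / (p + 1)) * b) := by
              rw [← Real.rpow_mul hh0]
          _ ≤ 2 ^ b * h ^ α := by
              apply mul_le_mul_of_nonneg_left _ (by positivity)
              rw [show (1 / (p + 1)) * b = b / (p + 1) by ring]
              exact hhb
      calc |g x - g y| ≤ |g x| + |g y| := abs_sub _ _
        _ ≤ x ^ b + y ^ b := add_le_add (hgabs x hx0) (hgabs y hy0)
        _ ≤ 2 ^ b * h ^ α + h ^ α := add_le_add hxb hyb
        _ ≤ C * h ^ α := by
            rw [hCdef]; nlinarith [hhα]
    · -- near case: MVT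
      have hy0' : 0 < y := by
        by_contra hc
        push_neg at hc
        have : y = 0 := le_antisymm hc hy0
        rw [this, Real.zero_rpow (by positivity : p + 1 ≠ 0)] at hcase
        linarith
      set e : ℝ := b - p - 1 with hedef
      set K : ℝ := max (y ^ e) 1 with hKdef
      have hK0 : 0 ≤ K := le_trans zero_le_one (le_max_right _ _)
      set g' : ℝ → ℝ := fun t =>
        b * t ^ (b - 1) * Real.sin (t ^ (-p)) +
          t ^ b * (Real.cos (t ^ (-p)) * (-p * t ^ (-p - 1))) with hg'def
      have hderiv : ∀ t ∈ Icc y 1, HasDerivWithinAt g (g' t) (Icc y 1) t := by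
        intro t ht
        have ht0 : 0 < t := lt_of_lt_of_le hy0' ht.1
        have d1 : HasDerivAt (fun s : ℝ => s ^ b) (b * t ^ (b - 1)) t :=
          Real.hasDerivAt_rpow_const (Or.inl ht0.ne')
        have d2 : HasDerivAt (fun s : ℝ => s ^ (-p)) (-p * t ^ (-p - 1)) t :=
          Real.hasDerivAt_rpow_const (Or.inl ht0.ne')
        have d3 : HasDerivAt (fun s : ℝ => Real.sin (s ^ (-p)))
            (Real.cos (t ^ (-p)) * (-p * t ^ (-p - 1))) t :=
          d2.sin
        exact (d1.mul d3).hasDerivWithinAt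
      have hbound : ∀ t ∈ Icc y 1, ‖g' t‖ ≤ (b + p) * K := by
        intro t ht
        have ht0 : 0 < t := lt_of_lt_of_le hy0' ht.1
        have ht1 : t ≤ 1 := ht.2
        have htK : t ^ e ≤ K := by
          rcases le_or_gt 0 e with he | he
          · calc t ^ e ≤ 1 ^ e := Real.rpow_le_rpow ht0.le ht1 he
              _ = 1 := Real.one_rpow e
              _ ≤ K := le_max_right _ _
          · calc t ^ e ≤ y ^ e := Real.rpow_le_rpow_of_nonpos hy0' ht.1 he.le
              _ ≤ K := le_max_left _ _
        have hte : t ^ (b - 1) ≤ t ^ e := by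
          apply Real.rpow_le_rpow_of_exponent_ge ht0 ht1
          rw [hedef]; linarith
        have htbp : t ^ b * t ^ (-p - 1) = t ^ e := by
          rw [← Real.rpow_add ht0]; congr 1; rw [hedef]; ring
        calc ‖g' t‖ ≤ ‖b * t ^ (b - 1) * Real.sin (t ^ (-p))‖ +
                ‖t ^ b * (Real.cos (t ^ (-p)) * (-p * t ^ (-p - 1)))‖ := norm_add_le _ _
          _ ≤ b * t ^ (b - 1) * 1 + t ^ b * (1 * (p * t ^ (-p - 1))) := by
              apply add_le_add
              · rw [norm_mul, Real.norm_eq_abs (Real.sin _),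
                  Real.norm_eq_abs (b * _), abs_of_nonneg (by positivity)]
                exact mul_le_mul_of_nonneg_left (Real.abs_sin_le_one _) (by positivity)
              · rw [norm_mul, norm_mul, norm_mul, Real.norm_eq_abs (t ^ b),
                  abs_of_nonneg (by positivity : (0:ℝ) ≤ t ^ b)]
                apply mul_le_mul_of_nonneg_left _ (by positivity)
                apply mul_le_mul (Real.abs_cos_le_one _)
                · have htn : (0:ℝ) ≤ t ^ (-p - 1) := by positivity
                  simp [Real.norm_eq_abs, abs_mul, abs_of_nonneg hp.le, abs_of_nonneg htn]
                · positivity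
                · norm_num
          _ = b * t ^ (b - 1) + p * (t ^ b * t ^ (-p - 1)) := by ring
          _ = b * t ^ (b - 1) + p * t ^ e := by rw [htbp]
          _ ≤ b * t ^ e + p * t ^ e :=
              add_le_add (mul_le_mul_of_nonneg_left hte hb0.le) le_rfl
          _ = (b + p) * t ^ e := by ring
          _ ≤ (b + p) * K := mul_le_mul_of_nonneg_left htK (by positivity)
      have hconv : Convex ℝ (Icc y (1:ℝ)) := convex_Icc _ _
      have hxs : x ∈ Icc y (1:ℝ) := ⟨hyx, hx1⟩
      have hys : y ∈ Icc y (1:ℝ) := ⟨le_refl y, hy1⟩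
      have hmvt := hconv.norm_image_sub_le_of_norm_hasDerivWithin_le hderiv hbound hys hxs
      rw [Real.norm_eq_abs, Real.norm_eq_abs] at hmvt
      have hKh : K * h ≤ h ^ α := by
        have h1α : (0:ℝ) < 1 - α := by linarith
        have split : h ^ (1 - α) * h ^ α = h := by
          rw [← Real.rpow_add hhpos]; norm_num
        have hK1 : K * h ^ (1 - α) ≤ 1 := by
          rw [hKdef, max_mul_of_nonneg _ _ (Real.rpow_nonneg hh0 _)]
          apply max_le
          · calc y ^ e * h ^ (1 - α) ≤ y ^ e * (y ^ (p + 1)) ^ (1 - α) := by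
                  apply mul_le_mul_of_nonneg_left _ (Real.rpow_nonneg hy0 _)
                  exact Real.rpow_le_rpow hh0 hcase.le h1α.le
              _ = y ^ (e + (p + 1) * (1 - α)) := by
                  rw [← Real.rpow_mul hy0, ← Real.rpow_add hy0']
              _ ≤ 1 := by
                  apply Real.rpow_le_one hy0 hy1
                  rw [hedef]; nlinarith
          · calc (1:ℝ) * h ^ (1 - α) = h ^ (1 - α) := one_mul _
              _ ≤ 1 := Real.rpow_le_one hh0 hh1 h1α.le
        calc K * h = (K * h ^ (1 - α)) * h ^ α := by rw [mul_assoc, split]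
          _ ≤ 1 * h ^ α := mul_le_mul_of_nonneg_right hK1 hhα
          _ = h ^ α := one_mul _
      calc |g x - g y| ≤ (b + p) * K * |x - y| := hmvt
        _ = (b + p) * (K * h) := by
            rw [hhdef, abs_of_nonneg hh0]; ring
        _ ≤ (b + p) * h ^ α := mul_le_mul_of_nonneg_left hKh (by positivity)
        _ ≤ C * h ^ α := by
            apply mul_le_mul_of_nonneg_right _ hhα
            have h2b : (0:ℝ) < 2 ^ b := by positivity
            rw [hCdef]; linarith
  refine ⟨C, fun x hx y hy => ?_⟩
  rcases le_total y x with hle | hle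
  · rw [abs_of_nonneg (by linarith : (0:ℝ) ≤ x - y)]
    exact key x hx y hy hle
  · rw [abs_sub_comm (x ^ b * _) _, abs_sub_comm x y,
      abs_of_nonneg (by linarith : (0:ℝ) ≤ y - x)]
    exact key y hy x hx hle
end

section
/- Let f : [0,1] → [0,1] be a C¹ diffeomorphism fixing 0 and 1, with f' > 0 and with f' α-Hölder for some α ∈ (0,1). For n ≥ 1 let a_n = max_{x∈[0,1]} log((fⁿ)'(x)) and a₀ = 0. Then there exist constants K, K₁ > 0 such that 2a_n − a_{n−1} − a_{n+1} ≤ K·exp(−a_n + K₁·n^{1−α}) for all n ≥ 1, provided the set {x : f(x) = x, f'(x) ≠ 1} is empty. -/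
open Set Real Filter

namespace Stmt18Aux

noncomputable section

variable {f : ℝ → ℝ}

local notation "I" => Set.Icc (0:ℝ) 1

lemma diffAt (hder : ∀ x ∈ I, 0 < deriv f x) {x : ℝ} (hx : x ∈ I) :
    DifferentiableAt ℝ f x := by
  by_contra h
  have := deriv_zero_of_not_differentiableAt h
  have := hder x hx
  linarith

lemma iter_mem (hmaps : Set.MapsTo f I I) {x : ℝ} (hx : x ∈ I) (k : ℕ) :
    f^[k] x ∈ I := hmaps.iterate k hx

lemma iter_deriv (hmaps : Set.MapsTo f I I) (hder : ∀ x ∈ I, 0 < deriv f x) :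
    ∀ n, ∀ x ∈ I, DifferentiableAt ℝ (f^[n]) x ∧
      deriv (f^[n]) x = ∏ k ∈ Finset.range n, deriv f (f^[k] x) := by
  intro n
  induction n with
  | zero =>
    intro x _
    simp [Function.iterate_zero]
  | succ n ih =>
    intro x hx
    have h1 := ih x hx
    have hfx : f^[n] x ∈ I := iter_mem hmaps hx n
    have hdf : DifferentiableAt ℝ f (f^[n] x) := diffAt hder hfx
    rw [Function.iterate_succ']
    refine ⟨hdf.comp x h1.1, ?_⟩
    rw [deriv_comp x hdf h1.1, h1.2, Finset.prod_range_succ, mul_comm]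

lemma iter_deriv_pos (hmaps : Set.MapsTo f I I) (hder : ∀ x ∈ I, 0 < deriv f x)
    (n : ℕ) {x : ℝ} (hx : x ∈ I) : 0 < deriv (f^[n]) x := by
  rw [(iter_deriv hmaps hder n x hx).2]
  exact Finset.prod_pos fun k _ => hder _ (iter_mem hmaps hx k)

lemma fmono (hC1 : ContDiffOn ℝ 1 f I) (hder : ∀ x ∈ I, 0 < deriv f x) :
    StrictMonoOn f I := by
  apply strictMonoOn_of_deriv_pos (convex_Icc 0 1) hC1.continuousOn
  intro x hx
  exact hder x (interior_subset hx)

lemma iter_mono (hmaps : Set.MapsTo f I I) (hC1 : ContDiffOn ℝ 1 f I)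
    (hder : ∀ x ∈ I, 0 < deriv f x) (n : ℕ) : MonotoneOn (f^[n]) I := by
  induction n with
  | zero => simpa [Function.iterate_zero] using (monotoneOn_id (s := I))
  | succ n ih =>
    rw [Function.iterate_succ']
    intro x hx y hy hxy
    exact ((fmono hC1 hder).monotoneOn) (iter_mem hmaps hx n) (iter_mem hmaps hy n) (ih hx hy hxy)

/-- the orbit of a point is monotone (increasing or decreasing) -/
lemma orbit_mono (hmaps : Set.MapsTo f I I) (hC1 : ContDiffOn ℝ 1 f I)
    (hder : ∀ x ∈ I, 0 < deriv f x) {x : ℝ} (hx : x ∈ I) :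
    Monotone (fun k => f^[k] x) ∨ Antitone (fun k => f^[k] x) := by
  rcases le_total x (f x) with h | h
  · left
    apply monotone_nat_of_le_succ
    intro k
    induction k with
    | zero => simpa using h
    | succ k ihk =>
      have h1 : f^[k] x ∈ I := iter_mem hmaps hx k
      have h2 : f^[k+1] x ∈ I := iter_mem hmaps hx (k+1)
      have := ((fmono hC1 hder).monotoneOn) h1 h2 ihk
      simpa [← Function.iterate_succ_apply' f] using this
  · right
    apply antitone_nat_of_succ_le
    intro k
    induction k with
    | zero => simpa using h
    | succ k ihk =>
      have h1 : f^[k] x ∈ I := iter_mem hmaps hx k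
      have h2 : f^[k+1] x ∈ I := iter_mem hmaps hx (k+1)
      have := ((fmono hC1 hder).monotoneOn) h2 h1 ihk
      simpa [← Function.iterate_succ_apply' f] using this

lemma orbit_step_sum (hmaps : Set.MapsTo f I I) (hC1 : ContDiffOn ℝ 1 f I)
    (hder : ∀ x ∈ I, 0 < deriv f x) {x : ℝ} (hx : x ∈ I) (n : ℕ) :
    ∑ k ∈ Finset.range n, |f^[k+1] x - f^[k] x| ≤ 1 := by
  have hmem : ∀ k, f^[k] x ∈ I := iter_mem hmaps hx
  rcases orbit_mono hmaps hC1 hder hx with hm | hm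
  · have : ∑ k ∈ Finset.range n, |f^[k+1] x - f^[k] x|
        = ∑ k ∈ Finset.range n, (f^[k+1] x - f^[k] x) := by
      apply Finset.sum_congr rfl
      intro k _
      exact abs_of_nonneg (sub_nonneg.2 (hm (Nat.le_succ k)))
    rw [this, Finset.sum_range_sub (fun k => f^[k] x)]
    have h1 := (hmem n).2
    have h2 := (hmem 0).1
    linarith
  · have : ∑ k ∈ Finset.range n, |f^[k+1] x - f^[k] x|
        = ∑ k ∈ Finset.range n, (f^[k] x - f^[k+1] x) := by
      apply Finset.sum_congr rfl
      intro k _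
      rw [abs_sub_comm]
      exact abs_of_nonneg (sub_nonneg.2 (hm (Nat.le_succ k)))
    rw [Finset.sum_range_sub' (fun k => f^[k] x)] at this
    rw [this]
    have h1 := (hmem n).1
    have h2 := (hmem 0).2
    linarith


variable {α Chol : ℝ}


lemma chol_nonneg (hhol : ∀ x ∈ I, ∀ y ∈ I, |deriv f x - deriv f y| ≤ Chol * |x - y| ^ α) :
    0 ≤ Chol := by
  have h := hhol 0 (by norm_num) 1 (by norm_num)
  have : |(0:ℝ) - 1| ^ α = 1 := by norm_num
  rw [this, mul_one] at h
  exact le_trans (abs_nonneg _) h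

lemma cont_deriv (hα : α ∈ Set.Ioo (0:ℝ) 1)
    (hhol : ∀ x ∈ I, ∀ y ∈ I, |deriv f x - deriv f y| ≤ Chol * |x - y| ^ α) :
    ContinuousOn (deriv f) I := by
  have hC := chol_nonneg hhol
  intro x hx
  rw [Metric.continuousWithinAt_iff]
  intro ε hε
  refine ⟨(ε / (Chol + 1)) ^ (1/α), Real.rpow_pos_of_pos (by positivity) _, ?_⟩
  intro y hy hdist
  rw [Real.dist_eq] at hdist ⊢
  have h1 : |y - x| ^ α < ((ε / (Chol + 1)) ^ (1/α)) ^ α :=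
    Real.rpow_lt_rpow (abs_nonneg _) hdist hα.1
  have h2 : ((ε / (Chol + 1)) ^ (1/α)) ^ α = ε / (Chol + 1) := by
    rw [← Real.rpow_mul (by positivity), one_div, inv_mul_cancel₀ (ne_of_gt hα.1),
      Real.rpow_one]
  rw [h2] at h1
  have h3 := hhol y hy x hx
  calc |deriv f y - deriv f x| ≤ Chol * |y - x| ^ α := h3
    _ ≤ Chol * (ε / (Chol + 1)) := by
        apply mul_le_mul_of_nonneg_left (le_of_lt h1) hC
    _ < ε := by
        rw [mul_div_assoc']
        rw [div_lt_iff₀ (by positivity)]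
        nlinarith

/-- |log a - log b| ≤ |a-b|/m for a,b ≥ m > 0 -/
lemma abs_log_sub_log {m a b : ℝ} (hm : 0 < m) (ha : m ≤ a) (hb : m ≤ b) :
    |Real.log a - Real.log b| ≤ |a - b| / m := by
  have key : ∀ u v : ℝ, m ≤ u → m ≤ v → v ≤ u →
      Real.log u - Real.log v ≤ (u - v) / m := by
    intro u v hu hv hvu
    have hv0 : 0 < v := lt_of_lt_of_le hm hv
    have hu0 : 0 < u := lt_of_lt_of_le hm hu
    have h1 : Real.log u - Real.log v = Real.log (u / v) := (Real.log_div (ne_of_gt hu0) (ne_of_gt hv0)).symm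
    rw [h1]
    have h2 : Real.log (u / v) ≤ u / v - 1 := Real.log_le_sub_one_of_pos (by positivity)
    have h3 : u / v - 1 = (u - v) / v := by field_simp
    have h4 : (u - v) / v ≤ (u - v) / m := by
      apply div_le_div_of_nonneg_left (by linarith) hm hv
    linarith
  rcases le_total b a with h | h
  · rw [abs_of_nonneg (by linarith : (0:ℝ) ≤ a - b),
      abs_of_nonneg (sub_nonneg.2 (Real.log_le_log (lt_of_lt_of_le hm hb) h))]
    exact key a b ha hb h
  · rw [abs_sub_comm, abs_sub_comm a b,
      abs_of_nonneg (by linarith : (0:ℝ) ≤ b - a),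
      abs_of_nonneg (sub_nonneg.2 (Real.log_le_log (lt_of_lt_of_le hm ha) h))]
    exact key b a hb ha h

/-- power-sum inequality: ∑ t_k ^ α ≤ n^(1-α) S^α -/
lemma sum_rpow_le {α : ℝ} (hα : α ∈ Set.Ioo (0:ℝ) 1) (n : ℕ) (t : ℕ → ℝ)
    (ht : ∀ k ∈ Finset.range n, 0 ≤ t k) {S : ℝ} (hS : 0 ≤ S)
    (hsum : ∑ k ∈ Finset.range n, t k ≤ S) :
    ∑ k ∈ Finset.range n, t k ^ α ≤ (n : ℝ) ^ (1 - α) * S ^ α := by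
  rcases Nat.eq_zero_or_pos n with rfl | hn
  · have hpos : (0:ℝ) < 1 - α := by linarith [hα.2]
    simp [Real.zero_rpow hpos.ne']
  have hn' : (0:ℝ) < n := by exact_mod_cast hn
  have key := Real.arith_mean_le_rpow_mean (p := 1/α) (Finset.range n) (fun _ => 1 / (n:ℝ))
    (fun k => t k ^ α) (fun i _ => by positivity)
    (by rw [Finset.sum_const, Finset.card_range, nsmul_eq_mul]; field_simp)
    (fun i hi => Real.rpow_nonneg (ht i hi) α)
    (by rw [le_div_iff₀ hα.1, one_mul]; exact hα.2.le)
  have hz : ∀ i ∈ Finset.range n, 1/(n:ℝ) * (t i ^ α) ^ (1/α) = 1/(n:ℝ) * t i := by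
    intro i hi
    rw [← Real.rpow_mul (ht i hi), mul_one_div, div_self (ne_of_gt hα.1), Real.rpow_one]
  rw [Finset.sum_congr rfl hz] at key
  have h1a : 1 / (1/α) = α := by field_simp
  rw [h1a] at key
  have h2 : ∑ i ∈ Finset.range n, 1 / (n:ℝ) * t i ^ α
      = (1/(n:ℝ)) * ∑ i ∈ Finset.range n, t i ^ α := by rw [Finset.mul_sum]
  have h3 : ∑ i ∈ Finset.range n, 1 / (n:ℝ) * t i
      = (1/(n:ℝ)) * ∑ i ∈ Finset.range n, t i := by rw [Finset.mul_sum]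
  rw [h2, h3] at key
  have h4 : ((1/(n:ℝ)) * ∑ i ∈ Finset.range n, t i) ^ α ≤ (S / (n:ℝ)) ^ α := by
    apply Real.rpow_le_rpow
    · exact mul_nonneg (by positivity) (Finset.sum_nonneg ht)
    · rw [div_eq_mul_one_div S (n:ℝ), mul_comm S]
      exact mul_le_mul_of_nonneg_left hsum (by positivity)
    · exact le_of_lt hα.1
  have key2 : (1/(n:ℝ)) * ∑ i ∈ Finset.range n, t i ^ α ≤ (S/(n:ℝ)) ^ α :=
    le_trans key h4
  have hfin : (n:ℝ) * ((S/(n:ℝ)) ^ α) = (n:ℝ)^(1-α) * S^α := by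
    rw [Real.div_rpow hS hn'.le, Real.rpow_sub hn', Real.rpow_one]
    have hne : ((n:ℝ))^α ≠ 0 := ne_of_gt (Real.rpow_pos_of_pos hn' α)
    field_simp
  have hstep := mul_le_mul_of_nonneg_left key2 hn'.le
  rw [hfin] at hstep
  have hl : (n:ℝ) * ((1/(n:ℝ)) * ∑ i ∈ Finset.range n, t i ^ α)
      = ∑ i ∈ Finset.range n, t i ^ α := by
    field_simp
  rw [hl] at hstep
  exact hstep


lemma iter_deriv_succ_left (hmaps : Set.MapsTo f I I) (hder : ∀ x ∈ I, 0 < deriv f x)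
    {x : ℝ} (hx : x ∈ I) (n : ℕ) :
    deriv (f^[n+1]) x = deriv (f^[n]) (f x) * deriv f x := by
  rw [Function.iterate_succ]
  exact deriv_comp x (iter_deriv hmaps hder n (f x) (hmaps hx)).1 (diffAt hder hx)

/-- distortion estimate -/
lemma distortion (hmaps : Set.MapsTo f I I) (hder : ∀ x ∈ I, 0 < deriv f x)
    (hm0 : 0 < m) (hm : ∀ x ∈ I, m ≤ deriv f x)
    (hhol : ∀ x ∈ I, ∀ y ∈ I, |deriv f x - deriv f y| ≤ Chol * |x - y| ^ α)
    (n : ℕ) {u v : ℝ} (hu : u ∈ I) (hv : v ∈ I) :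
    |Real.log (deriv (f^[n]) u) - Real.log (deriv (f^[n]) v)| ≤
      (Chol/m) * ∑ k ∈ Finset.range n, |f^[k] u - f^[k] v| ^ α := by
  rw [(iter_deriv hmaps hder n u hu).2, (iter_deriv hmaps hder n v hv).2,
    Real.log_prod (fun k _ => ne_of_gt (hder _ (iter_mem hmaps hu k))),
    Real.log_prod (fun k _ => ne_of_gt (hder _ (iter_mem hmaps hv k))),
    ← Finset.sum_sub_distrib, Finset.mul_sum]
  refine le_trans (Finset.abs_sum_le_sum_abs _ _) (Finset.sum_le_sum ?_)
  intro k _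
  have hukI := iter_mem hmaps hu k
  have hvkI := iter_mem hmaps hv k
  calc |Real.log (deriv f (f^[k] u)) - Real.log (deriv f (f^[k] v))|
      ≤ |deriv f (f^[k] u) - deriv f (f^[k] v)| / m :=
        abs_log_sub_log hm0 (hm _ hukI) (hm _ hvkI)
    _ ≤ (Chol * |f^[k] u - f^[k] v| ^ α) / m := by
        apply div_le_div_of_nonneg_right ?_ hm0.le
        exact hhol _ hukI _ hvkI
    _ = Chol / m * |f^[k] u - f^[k] v| ^ α := by ring

variable {a : ℕ → ℝ}

lemma a_ub (ha : ∀ n, IsGreatest ((fun x => Real.log (deriv (f^[n]) x)) '' I) (a n))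
    (n : ℕ) {x : ℝ} (hx : x ∈ I) : Real.log (deriv (f^[n]) x) ≤ a n :=
  (ha n).2 ⟨x, hx, rfl⟩

lemma a_max (ha : ∀ n, IsGreatest ((fun x => Real.log (deriv (f^[n]) x)) '' I) (a n))
    (n : ℕ) : ∃ x ∈ I, Real.log (deriv (f^[n]) x) = a n := by
  obtain ⟨x, hx, hxa⟩ := (ha n).1
  exact ⟨x, hx, hxa⟩

lemma a_nonneg (hder : ∀ x ∈ I, 0 < deriv f x) (h0 : f 0 = 0)
    (hfix : ∀ x ∈ I, f x = x → deriv f x = 1) (hmaps : Set.MapsTo f I I)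
    (ha : ∀ n, IsGreatest ((fun x => Real.log (deriv (f^[n]) x)) '' I) (a n))
    (n : ℕ) : 0 ≤ a n := by
  have h0I : (0:ℝ) ∈ I := by norm_num
  have hD : deriv (f^[n]) 0 = 1 := by
    rw [(iter_deriv hmaps hder n 0 h0I).2]
    have : ∀ k ∈ Finset.range n, deriv f (f^[k] (0:ℝ)) = 1 := by
      intro k _
      rw [Function.iterate_fixed h0 k]
      exact hfix 0 h0I h0
    rw [Finset.prod_congr rfl this, Finset.prod_const_one]
  have := a_ub ha n h0I
  rw [hD, Real.log_one] at this
  exact this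

/-- The key almost-convexity lemma. -/
lemma key_lemma (hα : α ∈ Set.Ioo (0:ℝ) 1)
    (hmaps : Set.MapsTo f I I) (hC1 : ContDiffOn ℝ 1 f I)
    (hder : ∀ x ∈ I, 0 < deriv f x) (h0 : f 0 = 0) (h1 : f 1 = 1)
    (hm0 : 0 < m) (hm : ∀ x ∈ I, m ≤ deriv f x)
    (hhol : ∀ x ∈ I, ∀ y ∈ I, |deriv f x - deriv f y| ≤ Chol * |x - y| ^ α)
    (hfix : ∀ x ∈ I, f x = x → deriv f x = 1)
    (ha : ∀ n, IsGreatest ((fun x => Real.log (deriv (f^[n]) x)) '' I) (a n))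
    (n : ℕ) (hn : 1 ≤ n) :
    2 * a n - a (n-1) - a (n+1) ≤
      (Chol/m + 1) * Real.exp (α * ((Chol/m + 1) * (n:ℝ)^(1-α) - a n)) := by
  have hc0 : 0 ≤ Chol/m := div_nonneg (chol_nonneg hhol) hm0.le
  obtain ⟨v, hvI, hva⟩ := a_max ha n
  -- preimage
  have hsurj : Set.Icc (0:ℝ) 1 ⊆ f '' I := by
    have := intermediate_value_Icc (by norm_num : (0:ℝ) ≤ 1) hC1.continuousOn
    rwa [h0, h1] at this
  obtain ⟨u, huI, hfu⟩ := hsurj hvI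
  by_cases hne : u = v
  · -- fixed point case, a n = 0
    have hfv : f v = v := by rw [← hne] at hfu ⊢; exact hfu
    have hDn : deriv (f^[n]) v = 1 := by
      rw [(iter_deriv hmaps hder n v hvI).2]
      have : ∀ k ∈ Finset.range n, deriv f (f^[k] v) = 1 := by
        intro k _
        rw [Function.iterate_fixed hfv k]
        exact hfix v hvI hfv
      rw [Finset.prod_congr rfl this, Finset.prod_const_one]
    rw [hDn, Real.log_one] at hva
    have h1' := a_nonneg hder h0 hfix hmaps ha (n-1)
    have h2' := a_nonneg hder h0 hfix hmaps ha (n+1)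
    have h3' : (0:ℝ) < (Chol/m + 1) * Real.exp (α * ((Chol/m + 1) * (n:ℝ)^(1-α) - a n)) := by
      positivity
    linarith
  -- main case
  -- (i) a (n+1) ≥ a n + log f' u
  have hfu' : 0 < deriv f u := hder u huI
  have hfv' : 0 < deriv f v := hder v hvI
  have hi : a n + Real.log (deriv f u) ≤ a (n+1) := by
    have hd := iter_deriv_succ_left hmaps hder huI n
    rw [hfu] at hd
    have := a_ub ha (n+1) huI
    rw [hd, Real.log_mul (ne_of_gt (iter_deriv_pos hmaps hder n hvI)) (ne_of_gt hfu'),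
      hva] at this
    linarith
  -- (ii) a (n-1) ≥ a n - log f' v
  have hii : a n - Real.log (deriv f v) ≤ a (n-1) := by
    obtain ⟨p, hp⟩ : ∃ p, n = p + 1 := ⟨n - 1, (Nat.succ_pred_eq_of_pos hn).symm⟩
    have hva2 := hva
    have hd := iter_deriv_succ_left hmaps hder hvI p
    rw [← hp] at hd
    rw [hd, Real.log_mul (ne_of_gt (iter_deriv_pos hmaps hder p (hmaps hvI))) (ne_of_gt hfv')]
      at hva2
    have := a_ub ha p (hmaps hvI)
    have hp' : n - 1 = p := by omega
    rw [hp']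
    linarith
  -- reduce to Hölder bound
  have hred : 2 * a n - a (n-1) - a (n+1) ≤
      Real.log (deriv f v) - Real.log (deriv f u) := by linarith
  have hhol_uv : Real.log (deriv f v) - Real.log (deriv f u) ≤ (Chol/m) * |v - u| ^ α := by
    calc Real.log (deriv f v) - Real.log (deriv f u)
        ≤ |Real.log (deriv f v) - Real.log (deriv f u)| := le_abs_self _
      _ ≤ |deriv f v - deriv f u| / m := abs_log_sub_log hm0 (hm v hvI) (hm u huI)
      _ ≤ (Chol * |v - u| ^ α) / m := div_le_div_of_nonneg_right (hhol v hvI u huI) hm0.le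
      _ = (Chol/m) * |v - u| ^ α := by ring
  -- now bound |v - u|
  have hshrink : |v - u| ≤ Real.exp ((Chol/m) * (n:ℝ)^(1-α) - a n) := by
    have hIccI : ∀ {p q : ℝ}, p ∈ I → q ∈ I → Set.Icc p q ⊆ I :=
      fun hp hq => Set.Icc_subset_Icc hp.1 hq.2
    have hDpos : ∀ {z : ℝ}, z ∈ I → 0 < deriv (f^[n]) z :=
      fun hz => iter_deriv_pos hmaps hder n hz
    rcases lt_or_gt_of_ne hne with hlt | hgt
    · -- u < v : increasing orbit
      have hsub : Set.Icc u v ⊆ I := hIccI huI hvI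
      have hmono : Monotone (fun k => f^[k] u) := by
        rcases orbit_mono hmaps hC1 hder huI with h | h
        · exact h
        · exfalso
          have := h (Nat.zero_le 1)
          simp only [Function.iterate_one, Function.iterate_zero, id] at this
          rw [hfu] at this; linarith
      obtain ⟨y, hyIoo, hyd⟩ := exists_deriv_eq_slope (f := f^[n]) hlt
        (fun x hx => ((iter_deriv hmaps hder n x (hsub hx)).1.continuousAt).continuousWithinAt)
        (fun x hx => ((iter_deriv hmaps hder n x (hsub (Set.Ioo_subset_Icc_self hx))).1).differentiableWithinAt)
      have hyI : y ∈ I := hsub (Set.Ioo_subset_Icc_self hyIoo)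
      -- step 1 : v - u ≤ 1 / deriv f^[n] y
      have hnum : f^[n] v - f^[n] u ≤ 1 := by
        have h1' := (iter_mem hmaps hvI n).2
        have h2' := (iter_mem hmaps huI n).1
        linarith
      have hvu : v - u = (f^[n] v - f^[n] u) / deriv (f^[n]) y := by
        rw [eq_div_iff (ne_of_gt (hDpos hyI)), hyd, mul_comm,
          div_mul_cancel₀ _ (ne_of_gt (sub_pos.2 hlt))]
      have hstep1 : v - u ≤ 1 / deriv (f^[n]) y := by
        rw [hvu]
        exact div_le_div_of_nonneg_right hnum (hDpos hyI).le
      -- step 2 : distortion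
      have hdist := distortion hmaps hder hm0 hm hhol n hyI hvI
      have hterm : ∀ k ∈ Finset.range n, |f^[k] y - f^[k] v| ^ α ≤
          (f^[k+1] u - f^[k] u) ^ α := by
        intro k _
        apply Real.rpow_le_rpow (abs_nonneg _) ?_ hα.1.le
        have hky : f^[k] y ≤ f^[k] v :=
          iter_mono hmaps hC1 hder k hyI hvI (le_of_lt hyIoo.2)
        have hku : f^[k] u ≤ f^[k] y :=
          iter_mono hmaps hC1 hder k huI hyI (le_of_lt hyIoo.1)
        have hkv : f^[k] v = f^[k+1] u := by
          rw [← hfu, ← Function.iterate_succ_apply]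
        rw [abs_sub_comm, abs_of_nonneg (by linarith [hkv ▸ hky] : (0:ℝ) ≤ f^[k] v - f^[k] y)]
        rw [hkv] at hky ⊢
        linarith
      have hsum : ∑ k ∈ Finset.range n, (f^[k+1] u - f^[k] u) ^ α ≤
          (n:ℝ)^(1-α) * (1:ℝ)^α := by
        apply sum_rpow_le hα n _ ?_ (by norm_num)
        · rw [Finset.sum_range_sub (fun k => f^[k] u)]
          have h1' := (iter_mem hmaps huI n).2
          have h2' := (iter_mem hmaps huI 0).1
          simp only [Function.iterate_zero, id] at h2'
          simp only [Function.iterate_zero, id]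
          linarith
        · intro k _
          have := hmono (Nat.le_succ k)
          simpa using sub_nonneg.2 this
      rw [Real.one_rpow, mul_one] at hsum
      have hdist2 : Real.log (deriv (f^[n]) v) - Real.log (deriv (f^[n]) y) ≤
          (Chol/m) * (n:ℝ)^(1-α) := by
        have habs : Real.log (deriv (f^[n]) v) - Real.log (deriv (f^[n]) y) ≤
            |Real.log (deriv (f^[n]) y) - Real.log (deriv (f^[n]) v)| := by
          rw [abs_sub_comm]; exact le_abs_self _
        refine le_trans habs (le_trans hdist ?_)
        apply le_trans (mul_le_mul_of_nonneg_left (Finset.sum_le_sum hterm) hc0)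
        exact mul_le_mul_of_nonneg_left hsum hc0
      have hlogy : a n - (Chol/m) * (n:ℝ)^(1-α) ≤ Real.log (deriv (f^[n]) y) := by
        rw [← hva]; linarith
      have : 1 / deriv (f^[n]) y ≤ Real.exp ((Chol/m) * (n:ℝ)^(1-α) - a n) := by
        rw [← Real.exp_log (hDpos hyI), one_div, ← Real.exp_neg]
        apply Real.exp_le_exp.mpr
        linarith
      rw [abs_of_pos (by linarith : (0:ℝ) < v - u)]
      linarith
    · -- v < u : decreasing orbit
      have hsub : Set.Icc v u ⊆ I := hIccI hvI huI
      have hanti : Antitone (fun k => f^[k] u) := by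
        rcases orbit_mono hmaps hC1 hder huI with h | h
        · exfalso
          have := h (Nat.zero_le 1)
          simp only [Function.iterate_one, Function.iterate_zero, id] at this
          rw [hfu] at this; linarith
        · exact h
      obtain ⟨y, hyIoo, hyd⟩ := exists_deriv_eq_slope (f := f^[n]) hgt
        (fun x hx => ((iter_deriv hmaps hder n x (hsub hx)).1.continuousAt).continuousWithinAt)
        (fun x hx => ((iter_deriv hmaps hder n x (hsub (Set.Ioo_subset_Icc_self hx))).1).differentiableWithinAt)
      have hyI : y ∈ I := hsub (Set.Ioo_subset_Icc_self hyIoo)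
      have hnum : f^[n] u - f^[n] v ≤ 1 := by
        have h1' := (iter_mem hmaps huI n).2
        have h2' := (iter_mem hmaps hvI n).1
        linarith
      have hvu : u - v = (f^[n] u - f^[n] v) / deriv (f^[n]) y := by
        rw [eq_div_iff (ne_of_gt (hDpos hyI)), hyd, mul_comm,
          div_mul_cancel₀ _ (ne_of_gt (sub_pos.2 hgt))]
      have hstep1 : u - v ≤ 1 / deriv (f^[n]) y := by
        rw [hvu]
        exact div_le_div_of_nonneg_right hnum (hDpos hyI).le
      have hdist := distortion hmaps hder hm0 hm hhol n hyI hvI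
      have hterm : ∀ k ∈ Finset.range n, |f^[k] y - f^[k] v| ^ α ≤
          (f^[k] u - f^[k+1] u) ^ α := by
        intro k _
        apply Real.rpow_le_rpow (abs_nonneg _) ?_ hα.1.le
        have hky : f^[k] v ≤ f^[k] y :=
          iter_mono hmaps hC1 hder k hvI hyI (le_of_lt hyIoo.1)
        have hku : f^[k] y ≤ f^[k] u :=
          iter_mono hmaps hC1 hder k hyI huI (le_of_lt hyIoo.2)
        have hkv : f^[k] v = f^[k+1] u := by
          rw [← hfu, ← Function.iterate_succ_apply]
        rw [abs_of_nonneg (by linarith : (0:ℝ) ≤ f^[k] y - f^[k] v)]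
        rw [hkv] at hky
        linarith
      have hsum : ∑ k ∈ Finset.range n, (f^[k] u - f^[k+1] u) ^ α ≤
          (n:ℝ)^(1-α) * (1:ℝ)^α := by
        apply sum_rpow_le hα n _ ?_ (by norm_num)
        · rw [Finset.sum_range_sub' (fun k => f^[k] u)]
          have h1' := (iter_mem hmaps huI n).1
          have h2' := (iter_mem hmaps huI 0).2
          simp only [Function.iterate_zero, id] at h2'
          simp only [Function.iterate_zero, id]
          linarith
        · intro k _
          have := hanti (Nat.le_succ k)
          simpa using sub_nonneg.2 this
      rw [Real.one_rpow, mul_one] at hsum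
      have hdist2 : Real.log (deriv (f^[n]) v) - Real.log (deriv (f^[n]) y) ≤
          (Chol/m) * (n:ℝ)^(1-α) := by
        have habs : Real.log (deriv (f^[n]) v) - Real.log (deriv (f^[n]) y) ≤
            |Real.log (deriv (f^[n]) y) - Real.log (deriv (f^[n]) v)| := by
          rw [abs_sub_comm]; exact le_abs_self _
        refine le_trans habs (le_trans hdist ?_)
        apply le_trans (mul_le_mul_of_nonneg_left (Finset.sum_le_sum hterm) hc0)
        exact mul_le_mul_of_nonneg_left hsum hc0
      have hlogy : a n - (Chol/m) * (n:ℝ)^(1-α) ≤ Real.log (deriv (f^[n]) y) := by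
        rw [← hva]; linarith
      have : 1 / deriv (f^[n]) y ≤ Real.exp ((Chol/m) * (n:ℝ)^(1-α) - a n) := by
        rw [← Real.exp_log (hDpos hyI), one_div, ← Real.exp_neg]
        apply Real.exp_le_exp.mpr
        linarith
      rw [abs_of_neg (by linarith : v - u < 0)]
      linarith
  have hfinal : (Chol/m) * |v - u| ^ α ≤
      (Chol/m + 1) * Real.exp (α * ((Chol/m + 1) * (n:ℝ)^(1-α) - a n)) := by
    have h1' : |v - u| ^ α ≤ (Real.exp ((Chol/m) * (n:ℝ)^(1-α) - a n)) ^ α :=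
      Real.rpow_le_rpow (abs_nonneg _) hshrink hα.1.le
    have h2' : (Real.exp ((Chol/m) * (n:ℝ)^(1-α) - a n)) ^ α
        = Real.exp (α * ((Chol/m) * (n:ℝ)^(1-α) - a n)) := by
      rw [← Real.exp_log (Real.rpow_pos_of_pos (Real.exp_pos _) α),
        Real.log_rpow (Real.exp_pos _), Real.log_exp]
    have h3' : Real.exp (α * ((Chol/m) * (n:ℝ)^(1-α) - a n))
        ≤ Real.exp (α * ((Chol/m + 1) * (n:ℝ)^(1-α) - a n)) := by
      apply Real.exp_le_exp.mpr
      have hrp : (0:ℝ) ≤ (n:ℝ)^(1-α) := Real.rpow_nonneg (Nat.cast_nonneg n) _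
      nlinarith [hα.1]
    calc (Chol/m) * |v - u| ^ α
        ≤ (Chol/m) * Real.exp (α * ((Chol/m) * (n:ℝ)^(1-α) - a n)) := by
          rw [← h2']
          exact mul_le_mul_of_nonneg_left h1' hc0
      _ ≤ (Chol/m + 1) * Real.exp (α * ((Chol/m + 1) * (n:ℝ)^(1-α) - a n)) := by
          have := (Real.exp_pos (α * ((Chol/m) * (n:ℝ)^(1-α) - a n))).le
          nlinarith [h3', Real.exp_pos (α * ((Chol/m + 1) * (n:ℝ)^(1-α) - a n))]
  linarith

/-! ### analysis helpers -/

lemma rpow_mvt {β x y : ℝ} (hβ : 0 < β) (hβ1 : β < 1) (hx : 0 < x) (hxy : x < y) :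
    β * y^(β-1) * (y - x) ≤ y^β - x^β ∧ y^β - x^β ≤ β * x^(β-1) * (y - x) := by
  have hy : 0 < y := lt_trans hx hxy
  have hcont : ContinuousOn (fun t : ℝ => t ^ β) (Set.Icc x y) := by
    intro t ht
    exact (Real.continuousAt_rpow_const t β (Or.inl (ne_of_gt (lt_of_lt_of_le hx ht.1)))).continuousWithinAt
  have hdiff : DifferentiableOn ℝ (fun t : ℝ => t ^ β) (Set.Ioo x y) := by
    intro t ht
    exact (Real.hasDerivAt_rpow_const (p := β)
      (Or.inl (ne_of_gt (lt_trans hx ht.1)))).differentiableAt.differentiableWithinAt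
  obtain ⟨c, hc, hcd⟩ := exists_deriv_eq_slope (fun t : ℝ => t ^ β) hxy hcont hdiff
  have hc0 : 0 < c := lt_trans hx hc.1
  have hder : deriv (fun t : ℝ => t ^ β) c = β * c ^ (β - 1) :=
    Real.deriv_rpow_const c β
  rw [hder] at hcd
  have hyx : 0 < y - x := sub_pos.2 hxy
  have heq : y ^ β - x ^ β = β * c ^ (β-1) * (y - x) := by
    field_simp at hcd
    linarith [hcd]
  have hneg : β - 1 ≤ 0 := by linarith
  constructor
  · rw [heq]
    have h := Real.rpow_le_rpow_of_nonpos hc0 hc.2.le hneg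
    exact mul_le_mul_of_nonneg_right (mul_le_mul_of_nonneg_left h hβ.le) hyx.le
  · rw [heq]
    have h := Real.rpow_le_rpow_of_nonpos hx hc.1.le hneg
    exact mul_le_mul_of_nonneg_right (mul_le_mul_of_nonneg_left h hβ.le) hyx.le

lemma sum_inv_sq (n : ℕ) (hn : 1 ≤ n) (j : ℕ) :
    ∑ k ∈ Finset.Icc n j, (1:ℝ)/(k:ℝ)^2 ≤ 2/(n:ℝ) := by
  have hn' : (0:ℝ) < n := by exact_mod_cast hn
  rcases le_or_gt n j with h | h
  · obtain ⟨t, rfl⟩ : ∃ t, j = n + t := ⟨j - n, by omega⟩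
    have key : ∀ t : ℕ, ∑ k ∈ Finset.Icc n (n+t), (1:ℝ)/(k:ℝ)^2 ≤ 2/(n:ℝ) - 1/((n+t:ℕ):ℝ) := by
      intro t
      induction t with
      | zero =>
        simp only [Nat.add_zero, Finset.Icc_self, Finset.sum_singleton]
        have : (1:ℝ)/(n:ℝ)^2 ≤ 1/(n:ℝ) := by
          rw [div_le_div_iff₀ (by positivity) hn']
          have h1n : (1:ℝ) ≤ (n:ℝ) := by exact_mod_cast hn
          nlinarith
        have h2 : 2/(n:ℝ) - 1/(n:ℝ) = 1/(n:ℝ) := by ring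
        rw [h2]
        exact this
      | succ t iht =>
        have hle : n ≤ n + t + 1 := by omega
        rw [show n + (t+1) = (n + t) + 1 by ring, Finset.sum_Icc_succ_top (by omega : n ≤ n+t+1)]
        have hnt : (0:ℝ) < ((n+t:ℕ):ℝ) := by positivity
        have hnt1 : (0:ℝ) < ((n+t+1:ℕ):ℝ) := by positivity
        have hstep : (1:ℝ)/((n+t+1:ℕ):ℝ)^2 ≤ 1/((n+t:ℕ):ℝ) - 1/((n+t+1:ℕ):ℝ) := by
          have hc : ((n+t+1:ℕ):ℝ) = ((n+t:ℕ):ℝ) + 1 := by push_cast; ring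
          rw [hc, div_sub_div _ _ (ne_of_gt hnt) (by positivity), div_le_div_iff₀ (by positivity) (by positivity)]
          ring_nf
          nlinarith
        have : ((n+t:ℕ)+1:ℕ) = (n+t+1:ℕ) := by omega
        rw [this]
        calc ∑ k ∈ Finset.Icc n (n+t), (1:ℝ)/(k:ℝ)^2 + (1:ℝ)/((n+t+1:ℕ):ℝ)^2
            ≤ (2/(n:ℝ) - 1/((n+t:ℕ):ℝ)) + (1/((n+t:ℕ):ℝ) - 1/((n+t+1:ℕ):ℝ)) := by
              exact add_le_add iht hstep
          _ = 2/(n:ℝ) - 1/((n+t+1:ℕ):ℝ) := by ring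
    calc ∑ k ∈ Finset.Icc n (n+t), (1:ℝ)/(k:ℝ)^2 ≤ 2/(n:ℝ) - 1/((n+t:ℕ):ℝ) := key t
      _ ≤ 2/(n:ℝ) := by
          have : (0:ℝ) < ((n+t:ℕ):ℝ) := by positivity
          have := one_div_pos.2 this
          linarith
  · rw [Finset.Icc_eq_empty (by omega)]
    simp
    positivity

lemma cs_exists {γ β : ℝ} (hγ : 0 < γ) (hβ : 0 < β) :
    ∃ Cs : ℝ, 1 ≤ Cs ∧ ∀ k : ℕ, 1 ≤ k → Real.exp (-(γ/2) * (k:ℝ)^β) ≤ Cs / (k:ℝ)^2 := by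
  have htend : Tendsto (fun k : ℕ => ((k:ℝ)^β) ^ (2/β) * Real.exp (-(γ/2) * (k:ℝ)^β))
      atTop (nhds 0) := by
    apply (tendsto_rpow_mul_exp_neg_mul_atTop_nhds_zero (2/β) (γ/2) (by positivity)).comp
    exact (tendsto_rpow_atTop hβ).comp tendsto_natCast_atTop_atTop
  have hsq : ∀ k : ℕ, ((k:ℝ)^β) ^ (2/β) = (k:ℝ)^(2:ℕ) := by
    intro k
    rw [← Real.rpow_natCast ((k:ℝ)) 2, ← Real.rpow_mul (Nat.cast_nonneg k)]
    congr 1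
    field_simp
    norm_num
  have htend2 : Tendsto (fun k : ℕ => (k:ℝ)^(2:ℕ) * Real.exp (-(γ/2) * (k:ℝ)^β))
      atTop (nhds 0) := by
    apply htend.congr
    intro k
    rw [hsq]
  have hev : ∀ᶠ k : ℕ in atTop, (k:ℝ)^(2:ℕ) * Real.exp (-(γ/2) * (k:ℝ)^β) ≤ 1 := by
    have := htend2.eventually (eventually_le_nhds (by norm_num : (0:ℝ) < 1))
    exact this
  obtain ⟨N, hN⟩ := eventually_atTop.1 hev
  refine ⟨max 1 ((N:ℝ)^(2:ℕ)), le_max_left _ _, ?_⟩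
  intro k hk
  have hk' : (0:ℝ) < (k:ℝ)^(2:ℕ) := by positivity
  rw [le_div_iff₀ hk']
  rcases le_or_gt N k with h | h
  · calc Real.exp (-(γ/2) * (k:ℝ)^β) * (k:ℝ)^(2:ℕ)
        = (k:ℝ)^(2:ℕ) * Real.exp (-(γ/2) * (k:ℝ)^β) := by ring
      _ ≤ 1 := hN k h
      _ ≤ max 1 ((N:ℝ)^(2:ℕ)) := le_max_left _ _
  · have hkN : (k:ℝ)^(2:ℕ) ≤ (N:ℝ)^(2:ℕ) := by
      apply pow_le_pow_left₀ (Nat.cast_nonneg k)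
      exact_mod_cast h.le
    have hexp1 : Real.exp (-(γ/2) * (k:ℝ)^β) ≤ 1 := by
      rw [← Real.exp_zero]
      apply Real.exp_le_exp.mpr
      have h0 : (0:ℝ) ≤ (γ/2) * (k:ℝ)^β := by
        apply mul_nonneg (by positivity) (Real.rpow_nonneg (Nat.cast_nonneg k) β)
      linarith
    calc Real.exp (-(γ/2) * (k:ℝ)^β) * (k:ℝ)^(2:ℕ)
        ≤ 1 * (N:ℝ)^(2:ℕ) := mul_le_mul hexp1 hkN hk'.le one_pos.le
      _ = (N:ℝ)^(2:ℕ) := one_mul _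
      _ ≤ max 1 ((N:ℝ)^(2:ℕ)) := le_max_right _ _

lemma exp_eventually {γ β : ℝ} (hγ : 0 < γ) (hβ : 0 < β) {q : ℝ} (hq : 0 < q) :
    ∃ N : ℕ, ∀ n : ℕ, N ≤ n → Real.exp (-γ * (n:ℝ)^β) ≤ q := by
  have h1 : Tendsto (fun n : ℕ => (n:ℝ)^β) atTop atTop :=
    (tendsto_rpow_atTop hβ).comp tendsto_natCast_atTop_atTop
  have h2 : Tendsto (fun n : ℕ => γ * (n:ℝ)^β) atTop atTop := h1.const_mul_atTop hγ
  have h3 : Tendsto (fun n : ℕ => -(γ * (n:ℝ)^β)) atTop atBot :=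
    tendsto_neg_atTop_atBot.comp h2
  have htend : Tendsto (fun n : ℕ => Real.exp (-γ * (n:ℝ)^β)) atTop (nhds 0) := by
    have := Real.tendsto_exp_atBot.comp h3
    apply this.congr
    intro n
    simp [neg_mul]
  have hev := htend.eventually (eventually_le_nhds hq)
  obtain ⟨N, hN⟩ := eventually_atTop.1 hev
  exact ⟨N, hN⟩

/-! ### Birkhoff sums, slope bounds, sublinearity -/

lemma log_iter_sum (hmaps : Set.MapsTo f I I) (hder : ∀ x ∈ I, 0 < deriv f x)
    {x : ℝ} (hx : x ∈ I) (n : ℕ) :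
    Real.log (deriv (f^[n]) x) = ∑ k ∈ Finset.range n, Real.log (deriv f (f^[k] x)) := by
  rw [(iter_deriv hmaps hder n x hx).2]
  exact Real.log_prod (fun k _ => ne_of_gt (hder _ (iter_mem hmaps hx k)))

lemma a_succ_le (hmaps : Set.MapsTo f I I) (hder : ∀ x ∈ I, 0 < deriv f x)
    (ha : ∀ n, IsGreatest ((fun x => Real.log (deriv (f^[n]) x)) '' I) (a n))
    {Aφ : ℝ} (hAφ : ∀ x ∈ I, Real.log (deriv f x) ≤ Aφ) (p : ℕ) :
    a (p+1) ≤ a p + Aφ := by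
  obtain ⟨x, hxI, hxa⟩ := a_max ha (p+1)
  have hd := iter_deriv_succ_left hmaps hder hxI p
  rw [hd, Real.log_mul (ne_of_gt (iter_deriv_pos hmaps hder p (hmaps hxI)))
    (ne_of_gt (hder x hxI))] at hxa
  have h1 := a_ub ha p (hmaps hxI)
  have h2 := hAφ x hxI
  linarith

lemma a_succ_ge (hmaps : Set.MapsTo f I I) (hder : ∀ x ∈ I, 0 < deriv f x)
    (ha : ∀ n, IsGreatest ((fun x => Real.log (deriv (f^[n]) x)) '' I) (a n))
    {Bφ : ℝ} (hBφ : ∀ x ∈ I, -Real.log (deriv f x) ≤ Bφ) (p : ℕ) :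
    a p - Bφ ≤ a (p+1) := by
  obtain ⟨x, hxI, hxa⟩ := a_max ha p
  have h1 := a_ub ha (p+1) hxI
  rw [log_iter_sum hmaps hder hxI (p+1), Finset.sum_range_succ,
    ← log_iter_sum hmaps hder hxI p, hxa] at h1
  have h2 := hBφ _ (iter_mem hmaps hxI p)
  linarith

lemma a_linear_bound (hmaps : Set.MapsTo f I I) (hder : ∀ x ∈ I, 0 < deriv f x)
    (ha : ∀ n, IsGreatest ((fun x => Real.log (deriv (f^[n]) x)) '' I) (a n))
    (ha0 : a 0 = 0)
    {Aφ : ℝ} (hAφ : ∀ x ∈ I, Real.log (deriv f x) ≤ Aφ) (hA0 : 0 ≤ Aφ) (n : ℕ) :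
    a n ≤ Aφ * n := by
  induction n with
  | zero => simp [ha0]
  | succ n ih =>
    have := a_succ_le hmaps hder ha hAφ n
    push_cast
    linarith

/-- sublinearity of `a` : no hyperbolic fixed points implies `a n = o(n)` -/
lemma sublinear (hα : α ∈ Set.Ioo (0:ℝ) 1)
    (hmaps : Set.MapsTo f I I) (hC1 : ContDiffOn ℝ 1 f I)
    (hder : ∀ x ∈ I, 0 < deriv f x) (h0 : f 0 = 0)
    (hhol : ∀ x ∈ I, ∀ y ∈ I, |deriv f x - deriv f y| ≤ Chol * |x - y| ^ α)
    (hfix : ∀ x ∈ I, f x = x → deriv f x = 1)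
    (ha : ∀ n, IsGreatest ((fun x => Real.log (deriv (f^[n]) x)) '' I) (a n))
    {ε : ℝ} (hε : 0 < ε) :
    ∃ C : ℝ, 0 ≤ C ∧ ∀ n : ℕ, a n ≤ ε * n + C := by
  classical
  have h0I : (0:ℝ) ∈ I := by norm_num
  have hφcont : ContinuousOn (fun x => Real.log (deriv f x)) I :=
    (cont_deriv hα hhol).log (fun x hx => ne_of_gt (hder x hx))
  obtain ⟨xM, hxM, hMax⟩ := isCompact_Icc.exists_isMaxOn ⟨0, h0I⟩ hφcont
  set Aφ := Real.log (deriv f xM) with hAφdef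
  have hAφ : ∀ x ∈ I, Real.log (deriv f x) ≤ Aφ := fun x hx => (isMaxOn_iff.1 hMax) x hx
  have hA0 : 0 ≤ Aφ := by
    have := hAφ 0 h0I
    have h1 : deriv f 0 = 1 := hfix 0 h0I h0
    have h2 := (isMaxOn_iff.1 hMax) 0 h0I
    rw [h1, Real.log_one] at h2
    exact h2
  set K := Set.Icc (0:ℝ) 1 ∩ (fun x => Real.log (deriv f x)) ⁻¹' (Set.Ici ε) with hKdef
  have hKsub : K ⊆ I := Set.inter_subset_left
  have hKclosed : IsClosed K :=
    hφcont.preimage_isClosed_of_isClosed isClosed_Icc isClosed_Ici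
  have hKcomp : IsCompact K := isCompact_Icc.of_isClosed_subset hKclosed hKsub
  rcases K.eq_empty_or_nonempty with hKe | hKne
  · -- everywhere φ < ε
    refine ⟨0, le_refl 0, ?_⟩
    intro n
    obtain ⟨x, hxI, hxa⟩ := a_max ha n
    rw [log_iter_sum hmaps hder hxI n] at hxa
    have hb : ∀ k ∈ Finset.range n, Real.log (deriv f (f^[k] x)) ≤ ε := by
      intro k _
      have hkI := iter_mem hmaps hxI k
      by_contra hcon
      push_neg at hcon
      have : f^[k] x ∈ K := ⟨hkI, le_of_lt hcon⟩
      rw [hKe] at this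
      exact this
    have := Finset.sum_le_sum hb
    rw [Finset.sum_const, Finset.card_range, nsmul_eq_mul] at this
    rw [← hxa]
    rw [add_zero, mul_comm]
    linarith
  · have hgcont : ContinuousOn (fun x => |f x - x|) K :=
      ((hC1.continuousOn.mono hKsub).sub (continuousOn_id)).abs
    obtain ⟨x₀, hx₀K, hmin⟩ := hKcomp.exists_isMinOn hKne hgcont
    set ρ := |f x₀ - x₀| with hρdef
    have hρ : 0 < ρ := by
      rcases eq_or_lt_of_le (abs_nonneg (f x₀ - x₀)) with h | h
      · exfalso
        have hzero : f x₀ - x₀ = 0 := abs_eq_zero.1 h.symm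
        have hfx0 : f x₀ = x₀ := by linarith
        have hone := hfix x₀ (hKsub hx₀K) hfx0
        have hK2 := hx₀K.2
        simp only [Set.mem_preimage, Set.mem_Ici] at hK2
        rw [hone, Real.log_one] at hK2
        linarith
      · exact h
    refine ⟨Aφ / ρ, by positivity, ?_⟩
    intro n
    obtain ⟨x, hxI, hxa⟩ := a_max ha n
    rw [log_iter_sum hmaps hder hxI n] at hxa
    set T := (Finset.range n).filter (fun k => f^[k] x ∈ K) with hTdef
    -- count bound
    have hcount : (T.card : ℝ) * ρ ≤ 1 := by
      have hper : ∀ k ∈ T, ρ ≤ |f^[k+1] x - f^[k] x| := by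
        intro k hk
        have hkK : f^[k] x ∈ K := (Finset.mem_filter.1 hk).2
        have := (isMinOn_iff.1 hmin) _ hkK
        rw [Function.iterate_succ_apply' f k x]
        exact this
      calc (T.card : ℝ) * ρ = ∑ _k ∈ T, ρ := by rw [Finset.sum_const, nsmul_eq_mul]
        _ ≤ ∑ k ∈ T, |f^[k+1] x - f^[k] x| := Finset.sum_le_sum hper
        _ ≤ ∑ k ∈ Finset.range n, |f^[k+1] x - f^[k] x| := by
            apply Finset.sum_le_sum_of_subset_of_nonneg (Finset.filter_subset _ _)
            intro k _ _
            exact abs_nonneg _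
        _ ≤ 1 := orbit_step_sum hmaps hC1 hder hxI n
    have hTA : ∑ k ∈ T, Real.log (deriv f (f^[k] x)) ≤ Aφ / ρ := by
      calc ∑ k ∈ T, Real.log (deriv f (f^[k] x)) ≤ ∑ _k ∈ T, Aφ := by
            apply Finset.sum_le_sum
            intro k _
            exact hAφ _ (iter_mem hmaps hxI k)
        _ = (T.card : ℝ) * Aφ := by rw [Finset.sum_const, nsmul_eq_mul]
        _ ≤ (1/ρ) * Aφ := by
            apply mul_le_mul_of_nonneg_right _ hA0
            rw [le_div_iff₀ hρ]
            exact hcount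
        _ = Aφ / ρ := by ring
    have hTc : ∑ k ∈ (Finset.range n).filter (fun k => ¬ (f^[k] x ∈ K)),
        Real.log (deriv f (f^[k] x)) ≤ ε * n := by
      have hper : ∀ k ∈ (Finset.range n).filter (fun k => ¬ (f^[k] x ∈ K)),
          Real.log (deriv f (f^[k] x)) ≤ ε := by
        intro k hk
        have hkI := iter_mem hmaps hxI k
        have hkK : ¬ (f^[k] x ∈ K) := (Finset.mem_filter.1 hk).2
        by_contra hcon
        push_neg at hcon
        exact hkK ⟨hkI, le_of_lt hcon⟩
      calc ∑ k ∈ (Finset.range n).filter (fun k => ¬ (f^[k] x ∈ K)),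
            Real.log (deriv f (f^[k] x)) ≤
          ∑ _k ∈ (Finset.range n).filter (fun k => ¬ (f^[k] x ∈ K)), ε :=
            Finset.sum_le_sum hper
        _ = (((Finset.range n).filter (fun k => ¬ (f^[k] x ∈ K))).card : ℝ) * ε := by
            rw [Finset.sum_const, nsmul_eq_mul]
        _ ≤ (n : ℝ) * ε := by
            apply mul_le_mul_of_nonneg_right _ hε.le
            have := Finset.card_filter_le (Finset.range n) (fun k => ¬ (f^[k] x ∈ K))
            rw [Finset.card_range] at this
            exact_mod_cast this
        _ = ε * n := by ring
    have hsplit := Finset.sum_filter_add_sum_filter_not (Finset.range n)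
      (fun k => f^[k] x ∈ K) (fun k => Real.log (deriv f (f^[k] x)))
    rw [← hxa, ← hsplit]
    linarith

set_option maxHeartbeats 2000000 in
/-- growth bound: `a n ≤ C₂ n^(1-α) + C₃` -/
lemma growth (hα : α ∈ Set.Ioo (0:ℝ) 1)
    (hmaps : Set.MapsTo f I I) (hC1 : ContDiffOn ℝ 1 f I)
    (hder : ∀ x ∈ I, 0 < deriv f x) (h0 : f 0 = 0) (h1 : f 1 = 1)
    (hm0 : 0 < m) (hm : ∀ x ∈ I, m ≤ deriv f x)
    (hhol : ∀ x ∈ I, ∀ y ∈ I, |deriv f x - deriv f y| ≤ Chol * |x - y| ^ α)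
    (hfix : ∀ x ∈ I, f x = x → deriv f x = 1)
    (ha : ∀ n, IsGreatest ((fun x => Real.log (deriv (f^[n]) x)) '' I) (a n))
    (ha0 : a 0 = 0) :
    ∃ C₂ : ℝ, 0 < C₂ ∧ ∃ C₃ : ℝ, 0 < C₃ ∧
      ∀ n : ℕ, 1 ≤ n → a n ≤ C₂ * (n:ℝ)^(1-α) + C₃ := by
  classical
  obtain ⟨hα0, hα1⟩ := hα
  set β := 1 - α with hβdef
  have hβ : 0 < β := by simp [hβdef]; linarith
  have hβ1 : β < 1 := by simp [hβdef]; linarith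
  set c₀ := Chol/m + 1 with hc₀def
  have hc₀ : 0 < c₀ := by
    have := div_nonneg (chol_nonneg hhol) hm0.le
    simp [hc₀def]; linarith
  set D := c₀ + 1 with hDdef
  have hD : 0 < D := by simp [hDdef]; linarith
  -- maximum of φ
  have h0I : (0:ℝ) ∈ I := by norm_num
  have hφcont : ContinuousOn (fun x => Real.log (deriv f x)) I :=
    (cont_deriv ⟨hα0, hα1⟩ hhol).log (fun x hx => ne_of_gt (hder x hx))
  obtain ⟨xM, hxM, hMax⟩ := isCompact_Icc.exists_isMaxOn ⟨0, h0I⟩ hφcont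
  set Aφ := Real.log (deriv f xM) with hAφdef
  have hAφ : ∀ x ∈ I, Real.log (deriv f x) ≤ Aφ := fun x hx => (isMaxOn_iff.1 hMax) x hx
  have hA0 : 0 ≤ Aφ := by
    have h2 := (isMaxOn_iff.1 hMax) 0 h0I
    rw [hfix 0 h0I h0, Real.log_one] at h2
    exact h2
  -- the key lemma specialized
  have hkey : ∀ k : ℕ, 1 ≤ k → a k - a (k+1) ≤ (a (k-1) - a k) +
      c₀ * Real.exp (α * (c₀ * (k:ℝ)^β - a k)) := by
    intro k hk
    have := key_lemma ⟨hα0, hα1⟩ hmaps hC1 hder h0 h1 hm0 hm hhol hfix ha k hk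
    rw [← hc₀def, ← hβdef] at this
    linarith
  clear_value β c₀ D Aφ
  -- abbreviation for the error terms
  obtain ⟨η, hηdef⟩ : ∃ η : ℕ → ℝ, η = fun k : ℕ => c₀ * Real.exp (-α * (k:ℝ)^β) :=
    ⟨_, rfl⟩
  have hηk : ∀ k : ℕ, η k = c₀ * Real.exp (-α * (k:ℝ)^β) := fun k => by rw [hηdef]
  have hηpos : ∀ k : ℕ, 0 < η k := fun k => by
    rw [hηk]; exact mul_pos hc₀ (Real.exp_pos _)
  obtain ⟨Cs, hCs1, hCs⟩ := cs_exists (γ := α) (β := β) hα0 hβ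
  have hCs0 : 0 < Cs := lt_of_lt_of_le one_pos hCs1
  -- threshold
  have h2b : (2:ℝ)^(β-1) < 1 := by
    apply Real.rpow_lt_one_of_one_lt_of_neg one_lt_two
    linarith
  obtain ⟨q, hqdef⟩ : ∃ q : ℝ, q = min 1 (min (D*β*(1 - (2:ℝ)^(β-1))) (D*β/2)) :=
    ⟨_, rfl⟩
  have hq : 0 < q := by
    rw [hqdef]
    apply lt_min one_pos
    apply lt_min
    · apply mul_pos (mul_pos hD hβ)
      linarith
    · exact div_pos (mul_pos hD hβ) (by norm_num)
  have hq1 : q ≤ 1 := hqdef ▸ min_le_left _ _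
  have hq2 : q ≤ D*β*(1 - (2:ℝ)^(β-1)) :=
    hqdef ▸ le_trans (min_le_right _ _) (min_le_left _ _)
  have hq3 : q ≤ D*β/2 := hqdef ▸ le_trans (min_le_right _ _) (min_le_right _ _)
  obtain ⟨N₁, hN₁⟩ := exp_eventually (γ := α/2) (β := β) (by positivity) hβ
    (q := q / (2*c₀*Cs)) (div_pos hq (mul_pos (mul_pos two_pos hc₀) hCs0))
  set N₀ := max N₁ 2 with hN₀def
  have hN₀2 : 2 ≤ N₀ := le_max_right _ _
  have hN₀1 : N₁ ≤ N₀ := le_max_left _ _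
  clear_value N₀
  obtain ⟨C₃, hC₃def⟩ : ∃ C₃ : ℝ, C₃ = Aφ * N₀ + 1 := ⟨_, rfl⟩
  have hAN : (0:ℝ) ≤ Aφ * N₀ := mul_nonneg hA0 (Nat.cast_nonneg _)
  have hC₃ : 0 < C₃ := by rw [hC₃def]; linarith
  have hC₃1 : 1 ≤ C₃ := by rw [hC₃def]; linarith
  refine ⟨D, hD, C₃, hC₃, ?_⟩
  by_contra hcon
  push_neg at hcon
  obtain ⟨nbad, hnbad1, hnbadgt⟩ := hcon
  have hex : ∃ n : ℕ, 1 ≤ n ∧ D * (n:ℝ)^β + C₃ < a n := ⟨nbad, hnbad1, hnbadgt⟩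
  set n₀ := Nat.find hex with hn₀def
  obtain ⟨hn₀1, hn₀gt⟩ := Nat.find_spec hex
  rw [← hn₀def] at hn₀1 hn₀gt
  have hn₀min : ∀ k, k < n₀ → 1 ≤ k → a k ≤ D * (k:ℝ)^β + C₃ := by
    intro k hk hk1
    have := Nat.find_min hex hk
    push_neg at this
    exact this hk1
  -- n₀ > N₀
  have hn₀N : N₀ < n₀ := by
    by_contra hle
    push_neg at hle
    have hlin := a_linear_bound hmaps hder ha ha0 hAφ hA0 n₀
    have hcast : (n₀:ℝ) ≤ (N₀:ℝ) := by exact_mod_cast hle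
    have hstep2 : Aφ * (n₀:ℝ) ≤ Aφ * (N₀:ℝ) := mul_le_mul_of_nonneg_left hcast hA0
    have h3 : a n₀ ≤ Aφ * N₀ := le_trans hlin hstep2
    have hrp : 0 ≤ D * (n₀:ℝ)^β :=
      mul_nonneg hD.le (Real.rpow_nonneg (Nat.cast_nonneg _) _)
    have hC₃a : Aφ * N₀ < C₃ := by rw [hC₃def]; linarith
    linarith
  have hn₀2 : 2 ≤ n₀ := le_trans hN₀2 hn₀N.le
  have hn₀N₁ : N₁ ≤ n₀ := le_trans hN₀1 hn₀N.le
  clear_value n₀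
  clear hn₀def
  obtain ⟨p, rfl⟩ : ∃ p, n₀ = p + 1 := ⟨n₀ - 1, by omega⟩
  have hp1 : 1 ≤ p := by omega
  have hpa : a p ≤ D * (p:ℝ)^β + C₃ := hn₀min p (by omega) hp1
  -- basic casts
  have hpcast : ((p+1:ℕ):ℝ) = (p:ℝ) + 1 := by push_cast; ring
  have hp0 : (0:ℝ) < (p:ℝ) := by exact_mod_cast hp1
  have hplt : (p:ℝ) < ((p+1:ℕ):ℝ) := by rw [hpcast]; linarith
  have hprpos : (0:ℝ) < ((p+1:ℕ):ℝ) := by rw [hpcast]; linarith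
  -- σ
  obtain ⟨σ, hσdef⟩ : ∃ σ : ℝ, σ = D * (((p+1:ℕ):ℝ)^β - ((p:ℕ):ℝ)^β) := ⟨_, rfl⟩
  have hmvt := rpow_mvt hβ hβ1 hp0 hplt
  have hσlb : D * β * ((p+1:ℕ):ℝ)^(β-1) ≤ σ := by
    have h1' := hmvt.1
    have he : ((p+1:ℕ):ℝ) - (p:ℝ) = 1 := by rw [hpcast]; ring
    rw [he, mul_one] at h1'
    rw [hσdef]
    calc D * β * ((p+1:ℕ):ℝ)^(β-1) = D * (β * ((p+1:ℕ):ℝ)^(β-1)) := by ring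
      _ ≤ D * (((p+1:ℕ):ℝ)^β - ((p:ℕ):ℝ)^β) := mul_le_mul_of_nonneg_left h1' hD.le
  have hσpos : 0 < σ := by
    have h' : (0:ℝ) < D * β * ((p+1:ℕ):ℝ)^(β-1) := by
      apply mul_pos (mul_pos hD hβ)
      exact Real.rpow_pos_of_pos hprpos _
    linarith
  have hbn₀ : σ < a (p+1) - a p := by
    have h2' : a p ≤ D * ((p:ℕ):ℝ)^β + C₃ := hpa
    rw [hσdef, mul_sub]
    linarith [hn₀gt]
  -- tail bound
  obtain ⟨TT, hTTdef⟩ : ∃ TT : ℝ,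
      TT = 2*c₀*Cs*Real.exp (-(α/2) * ((p+1:ℕ):ℝ)^β) := ⟨_, rfl⟩
  have hTTpos : 0 < TT := by
    rw [hTTdef]
    exact mul_pos (mul_pos (mul_pos two_pos hc₀) hCs0) (Real.exp_pos _)
  have htail : ∀ j : ℕ, ∑ k ∈ Finset.Icc (p+1) j, η k ≤ TT / ((p+1:ℕ):ℝ) := by
    intro j
    have hstep : ∀ k ∈ Finset.Icc (p+1) j, η k ≤
        (c₀ * Cs * Real.exp (-(α/2) * ((p+1:ℕ):ℝ)^β)) * ((1:ℝ)/(k:ℝ)^2) := by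
      intro k hk
      have hk1 : p + 1 ≤ k := (Finset.mem_Icc.1 hk).1
      have hkk : 1 ≤ k := by omega
      have hsplit : Real.exp (-α * (k:ℝ)^β) =
          Real.exp (-(α/2) * (k:ℝ)^β) * Real.exp (-(α/2) * (k:ℝ)^β) := by
        rw [← Real.exp_add]
        congr 1
        ring
      have hmono : ((p+1:ℕ):ℝ)^β ≤ (k:ℝ)^β := by
        apply Real.rpow_le_rpow (by positivity) _ hβ.le
        exact_mod_cast hk1
      have hf1 : Real.exp (-(α/2) * (k:ℝ)^β) ≤ Real.exp (-(α/2) * ((p+1:ℕ):ℝ)^β) := by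
        apply Real.exp_le_exp.mpr
        have := mul_le_mul_of_nonpos_left hmono (by linarith : -(α/2) ≤ 0)
        linarith
      have hf2 : Real.exp (-(α/2) * (k:ℝ)^β) ≤ Cs / (k:ℝ)^2 := hCs k hkk
      rw [hηk, hsplit]
      calc c₀ * (Real.exp (-(α/2) * (k:ℝ)^β) * Real.exp (-(α/2) * (k:ℝ)^β))
          ≤ c₀ * (Real.exp (-(α/2) * ((p+1:ℕ):ℝ)^β) * (Cs / (k:ℝ)^2)) := by
            apply mul_le_mul_of_nonneg_left _ hc₀.le
            exact mul_le_mul hf1 hf2 (Real.exp_pos _).le (Real.exp_pos _).le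
        _ = (c₀ * Cs * Real.exp (-(α/2) * ((p+1:ℕ):ℝ)^β)) * ((1:ℝ)/(k:ℝ)^2) := by
            ring
    calc ∑ k ∈ Finset.Icc (p+1) j, η k
        ≤ ∑ k ∈ Finset.Icc (p+1) j,
            (c₀ * Cs * Real.exp (-(α/2) * ((p+1:ℕ):ℝ)^β)) * ((1:ℝ)/(k:ℝ)^2) :=
          Finset.sum_le_sum hstep
      _ = (c₀ * Cs * Real.exp (-(α/2) * ((p+1:ℕ):ℝ)^β)) *
            ∑ k ∈ Finset.Icc (p+1) j, (1:ℝ)/(k:ℝ)^2 := by rw [← Finset.mul_sum]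
      _ ≤ (c₀ * Cs * Real.exp (-(α/2) * ((p+1:ℕ):ℝ)^β)) * (2/((p+1:ℕ):ℝ)) := by
          apply mul_le_mul_of_nonneg_left (sum_inv_sq (p+1) (by omega) j)
            (le_of_lt (mul_pos (mul_pos hc₀ hCs0) (Real.exp_pos _)))
      _ = TT / ((p+1:ℕ):ℝ) := by
          rw [hTTdef]
          rw [eq_div_iff (ne_of_gt hprpos)]
          field_simp
  -- TT is small
  have hTTq : TT ≤ q := by
    have hN₁le : N₁ ≤ p + 1 := by omega
    have hexp := hN₁ (p+1) hN₁le
    rw [hTTdef]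
    have h2c : (2*c₀*Cs) ≠ 0 := ne_of_gt (mul_pos (mul_pos two_pos hc₀) hCs0)
    calc 2*c₀*Cs*Real.exp (-(α/2) * ((p+1:ℕ):ℝ)^β)
        ≤ 2*c₀*Cs * (q / (2*c₀*Cs)) :=
          mul_le_mul_of_nonneg_left hexp
            (le_of_lt (mul_pos (mul_pos two_pos hc₀) hCs0))
      _ = q := by field_simp
  -- exponents: (p+1)^(β-1) ≥ 1/(p+1)
  have hpow_inv : 1/((p+1:ℕ):ℝ) ≤ ((p+1:ℕ):ℝ)^(β-1) := by
    have h1' : ((p+1:ℕ):ℝ)^(-1:ℝ) ≤ ((p+1:ℕ):ℝ)^(β-1) := by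
      apply Real.rpow_le_rpow_of_exponent_le
      · rw [hpcast]
        have : (1:ℝ) ≤ (p:ℝ) := by exact_mod_cast hp1
        linarith
      · linarith
    rwa [Real.rpow_neg_one, inv_eq_one_div] at h1'
  -- generic slope estimate
  have slope_gen : ∀ j : ℕ,
      (∀ k, p+1 ≤ k → k ≤ j → c₀ * Real.exp (α * (c₀ * (k:ℝ)^β - a k)) ≤ η k) →
      ∀ i, p+1 ≤ i → i ≤ j →
      (a (p+1) - a p) - (∑ k ∈ Finset.Icc (p+1) i, η k) ≤ a (i+1) - a i := by
    intro j hcurve i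
    induction i with
    | zero => intro h; omega
    | succ i ih =>
      intro hi1 hij
      rcases Nat.lt_or_ge (p+1) (i+1) with hlt | hge
      · have hi : p + 1 ≤ i := by omega
        have hij0 : i ≤ j := by omega
        have ihi := ih hi hij0
        have hkeyi := hkey (i+1) (by omega)
        have hsub : (i+1) - 1 = i := by omega
        rw [hsub] at hkeyi
        have hηi := hcurve (i+1) (by omega) hij
        have hsum : ∑ k ∈ Finset.Icc (p+1) (i+1), η k
            = ∑ k ∈ Finset.Icc (p+1) i, η k + η (i+1) :=
          Finset.sum_Icc_succ_top (by omega) _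
        rw [hsum]
        linarith
      · have hieq : i = p := by omega
        subst hieq
        have hkeyi := hkey (i+1) (by omega)
        have hsub : (i+1) - 1 = i := by omega
        rw [hsub] at hkeyi
        have hηi := hcurve (i+1) (by omega) hij
        rw [Finset.Icc_self, Finset.sum_singleton]
        linarith
  -- a curve hypothesis implies η-domination
  have hdom : ∀ k : ℕ, D * (k:ℝ)^β + (C₃ - 1) ≤ a k →
      c₀ * Real.exp (α * (c₀ * (k:ℝ)^β - a k)) ≤ η k := by
    intro k hak
    rw [hηk]
    apply mul_le_mul_of_nonneg_left _ hc₀.le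
    apply Real.exp_le_exp.mpr
    have h1' : c₀ * (k:ℝ)^β - a k ≤ -(k:ℝ)^β := by
      have hDe : D * (k:ℝ)^β = c₀ * (k:ℝ)^β + (k:ℝ)^β := by rw [hDdef]; ring
      linarith
    have h2' := mul_le_mul_of_nonneg_left h1' hα0.le
    have h3' : α * (-((k:ℝ)^β)) = -α * (k:ℝ)^β := by ring
    linarith
  -- per-step curve increment bound
  have hinc : ∀ i : ℕ, p+1 ≤ i →
      D * (((i+1:ℕ):ℝ)^β - ((i:ℕ):ℝ)^β) ≤ D * β * ((i:ℕ):ℝ)^(β-1) := by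
    intro i hi
    have hi0 : (0:ℝ) < (i:ℝ) := by
      have hii : 0 < i := by omega
      exact_mod_cast hii
    have hilt : (i:ℝ) < ((i+1:ℕ):ℝ) := by push_cast; linarith
    have hm2 := (rpow_mvt hβ hβ1 hi0 hilt).2
    have he : ((i+1:ℕ):ℝ) - (i:ℝ) = 1 := by push_cast; ring
    rw [he, mul_one] at hm2
    calc D * (((i+1:ℕ):ℝ)^β - ((i:ℕ):ℝ)^β) ≤ D * (β * ((i:ℕ):ℝ)^(β-1)) :=
          mul_le_mul_of_nonneg_left hm2 hD.le
      _ = D * β * ((i:ℕ):ℝ)^(β-1) := by ring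
  -- increments are at most σ
  have hinc_le_σ : ∀ i : ℕ, p+1 ≤ i →
      D * (((i+1:ℕ):ℝ)^β - ((i:ℕ):ℝ)^β) ≤ σ := by
    intro i hi
    have h1' := hinc i hi
    have h2' : ((i:ℕ):ℝ)^(β-1) ≤ ((p+1:ℕ):ℝ)^(β-1) := by
      apply Real.rpow_le_rpow_of_nonpos hprpos _ (by linarith)
      exact_mod_cast hi
    have h3' : D * β * ((i:ℕ):ℝ)^(β-1) ≤ D * β * ((p+1:ℕ):ℝ)^(β-1) :=
      mul_le_mul_of_nonneg_left h2' (mul_pos hD hβ).le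
    linarith
  -- for i ≥ 2(p+1) the increment is below σ - TT/(p+1)
  have hinc_far : ∀ i : ℕ, 2*(p+1) ≤ i →
      D * (((i+1:ℕ):ℝ)^β - ((i:ℕ):ℝ)^β) + TT/((p+1:ℕ):ℝ) ≤ σ := by
    intro i hi
    have hip : p + 1 ≤ i := by omega
    have h1' := hinc i hip
    have h2' : ((i:ℕ):ℝ)^(β-1) ≤ ((2*(p+1):ℕ):ℝ)^(β-1) := by
      apply Real.rpow_le_rpow_of_nonpos (by positivity) _ (by linarith)
      exact_mod_cast hi
    have hsplit2 : ((2*(p+1):ℕ):ℝ)^(β-1) = (2:ℝ)^(β-1) * ((p+1:ℕ):ℝ)^(β-1) := by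
      have : ((2*(p+1):ℕ):ℝ) = 2 * ((p+1:ℕ):ℝ) := by push_cast; ring
      rw [this, Real.mul_rpow (by norm_num) hprpos.le]
    have h3' : D * β * ((i:ℕ):ℝ)^(β-1) ≤
        D * β * ((2:ℝ)^(β-1) * ((p+1:ℕ):ℝ)^(β-1)) := by
      apply mul_le_mul_of_nonneg_left _ (mul_pos hD hβ).le
      rw [← hsplit2]
      exact h2'
    -- σ - increment ≥ D β (1-2^(β-1)) (p+1)^(β-1) ≥ q (p+1)^(β-1) ≥ q/(p+1) ≥ TT/(p+1)
    have hgap : D * β * (1 - (2:ℝ)^(β-1)) * ((p+1:ℕ):ℝ)^(β-1) ≤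
        σ - D * β * ((2:ℝ)^(β-1) * ((p+1:ℕ):ℝ)^(β-1)) := by
      have hid : D * β * (1 - (2:ℝ)^(β-1)) * ((p+1:ℕ):ℝ)^(β-1) =
          D * β * ((p+1:ℕ):ℝ)^(β-1) - D * β * ((2:ℝ)^(β-1) * ((p+1:ℕ):ℝ)^(β-1)) := by
        ring
      rw [hid]
      linarith [hσlb]
    have hgap2 : q * ((p+1:ℕ):ℝ)^(β-1) ≤
        D * β * (1 - (2:ℝ)^(β-1)) * ((p+1:ℕ):ℝ)^(β-1) := by
      apply mul_le_mul_of_nonneg_right hq2 (Real.rpow_pos_of_pos hprpos _).le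
    have hgap3 : q / ((p+1:ℕ):ℝ) ≤ q * ((p+1:ℕ):ℝ)^(β-1) := by
      rw [div_eq_mul_one_div]
      exact mul_le_mul_of_nonneg_left hpow_inv hq.le
    have hgap4 : TT / ((p+1:ℕ):ℝ) ≤ q / ((p+1:ℕ):ℝ) :=
      div_le_div_of_nonneg_right hTTq hprpos.le
    linarith only [h1', h3', hgap, hgap2, hgap3, hgap4]
  -- the invariant: above the curve forever
  have hQ : ∀ j, p+1 ≤ j → ∀ k, p+1 ≤ k → k ≤ j →
      D * (k:ℝ)^β + (C₃ - 1) ≤ a k := by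
    intro j hj
    induction j, hj using Nat.le_induction with
    | base =>
      intro k hk1 hk2
      have hkeq : k = p+1 := by omega
      subst hkeq
      linarith only [hn₀gt]
    | succ j hj ih =>
      intro k hk1 hk2
      rcases Nat.lt_or_ge k (j+1) with hk | hk
      · exact ih k hk1 (by omega)
      · have hkeq : k = j+1 := by omega
        subst hkeq
        -- curve hypothesis up to j
        have hcurve : ∀ k', p+1 ≤ k' → k' ≤ j →
            c₀ * Real.exp (α * (c₀ * (k':ℝ)^β - a k')) ≤ η k' := by
          intro k' h1' h2'
          exact hdom k' (ih k' h1' h2')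
        have hslope := slope_gen j hcurve
        -- telescoping setup
        have hLpos : p + 1 ≤ j := hj
        obtain ⟨L, hLdef⟩ : ∃ L, L = j - p := ⟨_, rfl⟩
        have hL1 : 1 ≤ L := by omega
        have hjL : p + 1 + L = j + 1 := by omega
        -- per-step lower bound for a-increments
        have hstep_lb : ∀ t, t < L →
            D * (((p+1+t+1:ℕ):ℝ)^β - ((p+1+t:ℕ):ℝ)^β) +
              (if t < p+1 then -(TT/((p+1:ℕ):ℝ)) else 0) ≤
            a (p+1+t+1) - a (p+1+t) := by
          intro t htL
          have hi1 : p+1 ≤ p+1+t := by omega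
          have hij : p+1+t ≤ j := by omega
          have hs := hslope (p+1+t) hi1 hij
          have ht := htail (p+1+t)
          have hincσ := hinc_le_σ (p+1+t) hi1
          have h2pi' : ¬ (t < p+1) → 2*(p+1) ≤ p+1+t := fun h => by omega
          by_cases hcase : t < p+1
          · simp only [hcase, if_true]
            linarith only [hs, ht, hbn₀, hincσ]
          · simp only [hcase, if_false]
            have hfar := hinc_far (p+1+t) (h2pi' hcase)
            linarith only [hs, ht, hbn₀, hfar]
        -- telescope sums
        have htel1 : ∑ t ∈ Finset.range L, (a (p+1+(t+1)) - a (p+1+t))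
            = a (p+1+L) - a (p+1+0) := Finset.sum_range_sub (fun t => a (p+1+t)) L
        have htel2 : ∑ t ∈ Finset.range L,
            (D * ((p+1+(t+1):ℕ):ℝ)^β - D * ((p+1+t:ℕ):ℝ)^β)
            = D * ((p+1+L:ℕ):ℝ)^β - D * ((p+1+0:ℕ):ℝ)^β :=
          Finset.sum_range_sub (fun t => D * ((p+1+t:ℕ):ℝ)^β) L
        have hsum_ge : ∑ t ∈ Finset.range L,
            (D * ((p+1+(t+1):ℕ):ℝ)^β - D * ((p+1+t:ℕ):ℝ)^β +
              (if t < p+1 then -(TT/((p+1:ℕ):ℝ)) else 0))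
            ≤ ∑ t ∈ Finset.range L, (a (p+1+(t+1)) - a (p+1+t)) := by
          apply Finset.sum_le_sum
          intro t htL
          have hst := hstep_lb t (Finset.mem_range.1 htL)
          have hidx : p+1+t+1 = p+1+(t+1) := by omega
          rw [hidx] at hst
          have hmul : D * (((p+1+(t+1):ℕ):ℝ)^β - ((p+1+t:ℕ):ℝ)^β) =
              D * ((p+1+(t+1):ℕ):ℝ)^β - D * ((p+1+t:ℕ):ℝ)^β := mul_sub _ _ _
          linarith [hst, hmul]
        -- bound the penalty sum
        have hpen : -(TT) ≤ ∑ t ∈ Finset.range L,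
            (if t < p+1 then -(TT/((p+1:ℕ):ℝ)) else 0) := by
          have heq : ∑ t ∈ Finset.range L,
              (if t < p+1 then -(TT/((p+1:ℕ):ℝ)) else 0)
              = ∑ t ∈ (Finset.range L).filter (fun t => t < p+1),
                  (-(TT/((p+1:ℕ):ℝ))) := (Finset.sum_filter _ _).symm
          rw [heq, Finset.sum_const, nsmul_eq_mul]
          have hcard : (((Finset.range L).filter (fun t => t < p+1)).card : ℝ) ≤
              ((p+1:ℕ):ℝ) := by
            have hsubf : (Finset.range L).filter (fun t => t < p+1) ⊆
                Finset.range (p+1) := by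
              intro t ht
              rw [Finset.mem_range]
              exact (Finset.mem_filter.1 ht).2
            have := Finset.card_le_card hsubf
            rw [Finset.card_range] at this
            exact_mod_cast this
          have hneg : -(TT/((p+1:ℕ):ℝ)) ≤ 0 := by
            have hnn : 0 ≤ TT/((p+1:ℕ):ℝ) := div_nonneg hTTpos.le hprpos.le
            linarith only [hnn]
          have := mul_le_mul_of_nonpos_right hcard hneg
          calc -(TT) = ((p+1:ℕ):ℝ) * (-(TT/((p+1:ℕ):ℝ))) := by
                field_simp
            _ ≤ (((Finset.range L).filter (fun t => t < p+1)).card : ℝ) *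
                  (-(TT/((p+1:ℕ):ℝ))) := this
        -- combine
        have hsum_split : ∑ t ∈ Finset.range L,
            (D * ((p+1+(t+1):ℕ):ℝ)^β - D * ((p+1+t:ℕ):ℝ)^β +
              (if t < p+1 then -(TT/((p+1:ℕ):ℝ)) else 0))
            = (D * ((p+1+L:ℕ):ℝ)^β - D * ((p+1+0:ℕ):ℝ)^β) +
              ∑ t ∈ Finset.range L, (if t < p+1 then -(TT/((p+1:ℕ):ℝ)) else 0) := by
          rw [Finset.sum_add_distrib, htel2]
        have hfinal1 : (D * ((p+1+L:ℕ):ℝ)^β - D * ((p+1+0:ℕ):ℝ)^β) - TT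
            ≤ a (p+1+L) - a (p+1+0) := by
          rw [← htel1]
          calc (D * ((p+1+L:ℕ):ℝ)^β - D * ((p+1+0:ℕ):ℝ)^β) - TT
              ≤ (D * ((p+1+L:ℕ):ℝ)^β - D * ((p+1+0:ℕ):ℝ)^β) +
                ∑ t ∈ Finset.range L, (if t < p+1 then -(TT/((p+1:ℕ):ℝ)) else 0) := by
                linarith [hpen]
            _ = ∑ t ∈ Finset.range L,
                (D * ((p+1+(t+1):ℕ):ℝ)^β - D * ((p+1+t:ℕ):ℝ)^β +
                  (if t < p+1 then -(TT/((p+1:ℕ):ℝ)) else 0)) := hsum_split.symm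
            _ ≤ _ := hsum_ge
        have hidx2 : p+1+0 = p+1 := by omega
        rw [hjL, hidx2] at hfinal1
        have hTT1 : TT ≤ 1 := le_trans hTTq hq1
        linarith only [hfinal1, hTT1, hn₀gt]
  -- slopes stay at least σ/2 forever
  have hcurve_all : ∀ k', p+1 ≤ k' →
      c₀ * Real.exp (α * (c₀ * (k':ℝ)^β - a k')) ≤ η k' := by
    intro k' hk'
    exact hdom k' (hQ k' hk' k' hk' le_rfl)
  have hhalf : TT/((p+1:ℕ):ℝ) ≤ σ/2 := by
    have h1' : TT/((p+1:ℕ):ℝ) ≤ (D*β/2)/((p+1:ℕ):ℝ) :=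
      div_le_div_of_nonneg_right (le_trans hTTq hq3) hprpos.le
    have h2' : (D*β/2)/((p+1:ℕ):ℝ) = (D*β/2) * (1/((p+1:ℕ):ℝ)) := by ring
    rw [h2'] at h1'
    have h3' : (D*β/2) * (1/((p+1:ℕ):ℝ)) ≤ (D*β/2) * ((p+1:ℕ):ℝ)^(β-1) :=
      mul_le_mul_of_nonneg_left hpow_inv
        (le_of_lt (div_pos (mul_pos hD hβ) (by norm_num)))
    have h5' : (D*β/2) * ((p+1:ℕ):ℝ)^(β-1) = (D*β*((p+1:ℕ):ℝ)^(β-1))/2 := by ring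
    linarith [hσlb]
  have hslope_all : ∀ i, p+1 ≤ i → σ/2 ≤ a (i+1) - a i := by
    intro i hi
    have hsl := slope_gen i (fun k hk1 _ => hcurve_all k hk1) i hi le_rfl
    have ht := htail i
    linarith only [hsl, ht, hbn₀, hhalf]
  -- linear growth
  have hgrow : ∀ L : ℕ, a (p+1) + L * (σ/2) ≤ a (p+1+L) := by
    intro L
    induction L with
    | zero => simp
    | succ L ihL =>
      have := hslope_all (p+1+L) (by omega)
      have hidx : p+1+(L+1) = (p+1+L)+1 := by omega
      rw [hidx]
      push_cast
      push_cast at ihL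
      linarith
  -- contradiction with sublinearity
  obtain ⟨C', hC'0, hC'⟩ := sublinear ⟨hα0, hα1⟩ hmaps hC1 hder h0 hhol hfix ha
    (ε := σ/4) (by linarith only [hσpos])
  have hbound : ∀ L : ℕ, (L:ℝ) * (σ/4) ≤ (σ/4) * ((p:ℝ)+1) + C' - a (p+1) := by
    intro L
    have h1' := hgrow L
    have h2' := hC' (p+1+L)
    have hcast2 : ((p+1+L:ℕ):ℝ) = (p:ℝ) + 1 + L := by push_cast; ring
    rw [hcast2] at h2'
    have hexp2 : (σ/4) * ((p:ℝ)+1+L) = (σ/4)*((p:ℝ)+1) + (L:ℝ)*(σ/4) := by ring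
    rw [hexp2] at h2'
    have hid2 : (L:ℝ)*(σ/2) = (L:ℝ)*(σ/4) + (L:ℝ)*(σ/4) := by ring
    linarith
  obtain ⟨Lbig, hLbig⟩ : ∃ Lbig : ℕ,
      ((σ/4) * ((p:ℝ)+1) + C' - a (p+1)) / (σ/4) + 1 ≤ (Lbig:ℝ) := by
    refine ⟨Nat.ceil (((σ/4) * ((p:ℝ)+1) + C' - a (p+1)) / (σ/4) + 1), ?_⟩
    exact Nat.le_ceil _
  have hσ4 : (0:ℝ) < σ/4 := by linarith only [hσpos]
  have h1f := hbound Lbig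
  have h2f : (((σ/4) * ((p:ℝ)+1) + C' - a (p+1)) / (σ/4) + 1) * (σ/4) ≤
      (Lbig:ℝ) * (σ/4) := mul_le_mul_of_nonneg_right hLbig hσ4.le
  have hdiv : ((σ/4) * ((p:ℝ)+1) + C' - a (p+1)) / (σ/4) * (σ/4) =
      (σ/4) * ((p:ℝ)+1) + C' - a (p+1) := by
    field_simp
  rw [add_mul, hdiv, one_mul] at h2f
  linarith

end

end Stmt18Aux

theorem stmt_18 (α : ℝ) (hα : α ∈ Set.Ioo (0:ℝ) 1)
    (f : ℝ → ℝ)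
    (hmaps : Set.MapsTo f (Set.Icc 0 1) (Set.Icc 0 1))
    (hC1 : ContDiffOn ℝ 1 f (Set.Icc 0 1))
    (hder : ∀ x ∈ Set.Icc (0:ℝ) 1, 0 < deriv f x)
    (h0 : f 0 = 0) (h1 : f 1 = 1)
    (Chol : ℝ)
    (hhol : ∀ x ∈ Set.Icc (0:ℝ) 1, ∀ y ∈ Set.Icc (0:ℝ) 1,
      |deriv f x - deriv f y| ≤ Chol * |x - y| ^ α)
    (hfix : ∀ x ∈ Set.Icc (0:ℝ) 1, f x = x → deriv f x = 1)
    (a : ℕ → ℝ) (ha0 : a 0 = 0)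
    (ha : ∀ n, IsGreatest ((fun x => Real.log (deriv (f^[n]) x)) '' Set.Icc 0 1) (a n)) :
    ∃ K > 0, ∃ K₁ > 0, ∀ n ≥ 1,
      2 * a n - a (n - 1) - a (n + 1) ≤
        K * Real.exp (-a n + K₁ * (n : ℝ) ^ (1 - α)) := by
  have h0I : (0:ℝ) ∈ Set.Icc (0:ℝ) 1 := by norm_num
  have hcont : ContinuousOn (deriv f) (Set.Icc (0:ℝ) 1) := Stmt18Aux.cont_deriv hα hhol
  -- minimum of the derivative
  obtain ⟨xm, hxmI, hminOn⟩ := isCompact_Icc.exists_isMinOn ⟨0, h0I⟩ hcont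
  set m := deriv f xm with hmdef
  have hm0 : 0 < m := hder xm hxmI
  have hm : ∀ x ∈ Set.Icc (0:ℝ) 1, m ≤ deriv f x := fun x hx => (isMinOn_iff.1 hminOn) x hx
  -- maximum of φ = log ∘ deriv f
  have hφcont : ContinuousOn (fun x => Real.log (deriv f x)) (Set.Icc (0:ℝ) 1) :=
    hcont.log (fun x hx => ne_of_gt (hder x hx))
  obtain ⟨xM, hxMI, hmaxOn⟩ := isCompact_Icc.exists_isMaxOn ⟨0, h0I⟩ hφcont
  set Aφ := Real.log (deriv f xM) with hAdef
  have hAφ : ∀ x ∈ Set.Icc (0:ℝ) 1, Real.log (deriv f x) ≤ Aφ :=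
    fun x hx => (isMaxOn_iff.1 hmaxOn) x hx
  have hA0 : 0 ≤ Aφ := by
    have h2 := hAφ 0 h0I
    rw [hfix 0 h0I h0, Real.log_one] at h2
    exact h2
  set Bφ := -Real.log m with hBdef
  have hBφ : ∀ x ∈ Set.Icc (0:ℝ) 1, -Real.log (deriv f x) ≤ Bφ := by
    intro x hx
    have := Real.log_le_log hm0 (hm x hx)
    rw [hBdef]
    linarith
  have hB0 : 0 ≤ Bφ := by
    have h2 := hm 0 h0I
    rw [hfix 0 h0I h0] at h2
    have := Real.log_nonpos_iff hm0.le |>.2 h2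
    rw [hBdef]
    linarith
  -- growth bound
  obtain ⟨C₂, hC₂, C₃, hC₃, hgrowth⟩ :=
    Stmt18Aux.growth hα hmaps hC1 hder h0 h1 hm0 hm hhol hfix ha ha0
  refine ⟨(Aφ + Bφ + 1) * Real.exp C₃, by positivity, C₂, hC₂, ?_⟩
  intro n hn
  -- LHS bound
  obtain ⟨p, rfl⟩ : ∃ p, n = p + 1 := ⟨n - 1, by omega⟩
  have hup : a (p+1) ≤ a p + Aφ := Stmt18Aux.a_succ_le hmaps hder ha hAφ p
  have hdown : a (p+1) - Bφ ≤ a (p+1+1) := Stmt18Aux.a_succ_ge hmaps hder ha hBφ (p+1)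
  have hLHS : 2 * a (p+1) - a (p+1-1) - a (p+1+1) ≤ Aφ + Bφ := by
    have hidx : p + 1 - 1 = p := by omega
    rw [hidx]
    linarith
  -- RHS bound
  have hexp : -C₃ ≤ -a (p+1) + C₂ * ((p+1:ℕ):ℝ) ^ (1-α) := by
    have := hgrowth (p+1) (by omega)
    linarith
  have hKpos : (0:ℝ) < Aφ + Bφ + 1 := by linarith
  calc 2 * a (p+1) - a (p+1-1) - a (p+1+1) ≤ Aφ + Bφ := hLHS
    _ ≤ (Aφ + Bφ + 1) * (Real.exp C₃ * Real.exp (-C₃)) := by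
        rw [← Real.exp_add, add_neg_cancel, Real.exp_zero, mul_one]
        linarith
    _ = (Aφ + Bφ + 1) * Real.exp C₃ * Real.exp (-C₃) := by ring
    _ ≤ (Aφ + Bφ + 1) * Real.exp C₃ *
          Real.exp (-a (p+1) + C₂ * ((p+1:ℕ):ℝ) ^ (1-α)) := by
        apply mul_le_mul_of_nonneg_left _ (by positivity)
        exact Real.exp_le_exp.mpr hexp
end
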